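/- arXiv:2005.02248 — 3 statements merged into one kernel-verified Lean document; each statement's English description precedes it below -/
import Mathlib

section
/- Let η₁, …, η_r be orthonormal vectors in a real Hilbert space H, let Φ be an n-dimensional subspace of H, let p = min{n, r}, suppose P_Φ η₁, …, P_Φ η_p are linearly independent, and let q₁, …, q_p be their Gram–Schmidt orthonormalization. Then for all indices 1 ≤ j ≤ k ≤ p, d_F(span{q_j, …, q_k}, span{η_j, …, η_k})² ≤ d_F(span{η₁, …, η_{j−1}}, Φ)² + d_F(span{η₁, …, η_k}, Φ)² (with span{η₁, …, η₀} = {0} when j = 1). -/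
open scoped RealInnerProductSpace ENNReal
open Submodule Filter

noncomputable section

variable {H : Type*} [NormedAddCommGroup H] [InnerProductSpace ℝ H] [CompleteSpace H]

/-- Orthogonal projection onto `U`, as an operator `H → H` (defined to be `0` in the
degenerate case where `U` admits no orthogonal projection). -/
noncomputable def proj (U : Submodule ℝ H) : H →L[ℝ] H := by
  classical
  exact if h : HasOrthogonalProjection U then
    (haveI := h; U.subtypeL ∘L orthogonalProjection U)
  else 0

/-- Squared Hilbert–Schmidt norm of an operator, computed in a fixed Hilbert basis of `H`. -/
noncomputable def hsNormSq (A : H →L[ℝ] H) : ℝ≥0∞ :=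
  ∑' i : (exists_hilbertBasis ℝ H).choose,
    (‖A ((exists_hilbertBasis ℝ H).choose_spec.choose i)‖₊ : ℝ≥0∞) ^ 2

/-- Hilbert–Schmidt (Frobenius) norm of an operator. -/
noncomputable def hsNorm (A : H →L[ℝ] H) : ℝ := Real.sqrt (hsNormSq A).toReal

/-- Projection distance `d_F(U, W) = ‖P_{Wᗮ} P_U‖_F`. -/
noncomputable def dF (U W : Submodule ℝ H) : ℝ := hsNorm ((proj Wᗮ) ∘L (proj U))

/-- Gap distance `d₂(U, W) = ‖P_{Wᗮ} P_U‖₂`. -/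
noncomputable def d2 (U W : Submodule ℝ H) : ℝ := ‖(proj Wᗮ) ∘L (proj U)‖


-- auxiliary lemmas

lemma proj_apply (U : Submodule ℝ H) [h : HasOrthogonalProjection U] (x : H) :
    proj U x = (orthogonalProjection U x : H) := by
  unfold proj
  rw [dif_pos h]
  rfl

lemma proj_mem (U : Submodule ℝ H) [HasOrthogonalProjection U] (x : H) :
    proj U x ∈ U := by
  rw [proj_apply]; exact (orthogonalProjection U x).2

lemma inner_proj_eq (U : Submodule ℝ H) [HasOrthogonalProjection U] {y : H} (hy : y ∈ U)
    (x : H) : ⟪y, proj U x⟫ = ⟪y, x⟫ := by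
  rw [proj_apply]
  have h := sub_starProjection_mem_orthogonal (K := U) x
  have h2 : ⟪y, x - (orthogonalProjection U x : H)⟫ = 0 := h y hy
  rw [inner_sub_right] at h2
  linarith

lemma proj_span_apply {ι : Type*} [Fintype ι] (e : ι → H) (he : Orthonormal ℝ e) (x : H) :
    haveI : FiniteDimensional ℝ (span ℝ (Set.range e)) :=
      FiniteDimensional.span_of_finite ℝ (Set.finite_range e)
    proj (span ℝ (Set.range e)) x = ∑ s, ⟪e s, x⟫ • e s := by
  classical
  haveI : FiniteDimensional ℝ (span ℝ (Set.range e)) :=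
    FiniteDimensional.span_of_finite ℝ (Set.finite_range e)
  rw [proj_apply]
  refine (starProjection_apply _ _).symm.trans (eq_starProjection_of_mem_of_inner_eq_zero ?_ ?_)
  · exact Submodule.sum_mem _ fun s _ => Submodule.smul_mem _ _ (subset_span ⟨s, rfl⟩)
  · intro w hw
    induction hw using Submodule.span_induction with
    | mem w hw =>
      obtain ⟨t, rfl⟩ := hw
      rw [inner_sub_left, sum_inner]
      have : ∀ s : ι, ⟪⟪e s, x⟫ • e s, e t⟫ = if s = t then ⟪e s, x⟫ else 0 := by
        intro s
        rw [real_inner_smul_left, orthonormal_iff_ite.mp he s t]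
        by_cases h : s = t <;> simp [h]
      rw [Finset.sum_congr rfl fun s _ => this s, Finset.sum_ite_eq' Finset.univ t]
      simp [real_inner_comm]
    | zero => simp
    | add u v _ _ hu hv => rw [inner_add_right, hu, hv, add_zero]
    | smul a u _ hu => rw [inner_smul_right, hu, mul_zero]

lemma normSq_proj_orthogonal' (W : Submodule ℝ H) [HasOrthogonalProjection W] (x : H) :
    ‖proj Wᗮ x‖ ^ 2 = ‖x‖ ^ 2 - ‖proj W x‖ ^ 2 := by
  rw [proj_apply Wᗮ, ← starProjection_apply, starProjection_orthogonal_val, starProjection_apply, proj_apply W]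
  set y := (orthogonalProjection W x : H)
  have h0 : ⟪x - y, y⟫ = 0 := starProjection_inner_eq_zero x y (orthogonalProjection W x).2
  have h1 : ⟪x, y⟫ = ‖y‖ ^ 2 := by
    rw [inner_sub_left] at h0
    rw [← real_inner_self_eq_norm_sq]
    linarith
  rw [norm_sub_sq_real, h1]
  ring

lemma hasSum_normSq_basis {κ ι : Type*} [Fintype ι] (b : HilbertBasis κ ℝ H) (e : ι → H)
    (he : Orthonormal ℝ e) (B : H →L[ℝ] H) :
    HasSum (fun i : κ => ‖B (proj (span ℝ (Set.range e)) (b i))‖ ^ 2)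
      (∑ s, ‖B (e s)‖ ^ 2) := by
  classical
  haveI : FiniteDimensional ℝ (span ℝ (Set.range e)) :=
    FiniteDimensional.span_of_finite ℝ (Set.finite_range e)
  have expand : ∀ i : κ, ‖B (proj (span ℝ (Set.range e)) (b i))‖ ^ 2 =
      ∑ st : ι × ι, (⟪e st.1, b i⟫ * ⟪e st.2, b i⟫) * ⟪B (e st.1), B (e st.2)⟫ := by
    intro i
    have h1 : B (proj (span ℝ (Set.range e)) (b i)) = ∑ s, ⟪e s, (b i : H)⟫ • B (e s) := by
      rw [proj_span_apply e he, map_sum]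
      simp [map_smul]
    rw [← real_inner_self_eq_norm_sq, h1, sum_inner, Fintype.sum_prod_type]
    refine Finset.sum_congr rfl fun s _ => ?_
    rw [real_inner_smul_left, inner_sum, Finset.mul_sum]
    refine Finset.sum_congr rfl fun t _ => ?_
    rw [real_inner_smul_right]
    ring
  have hterm : ∀ st : ι × ι, HasSum
      (fun i : κ => (⟪e st.1, b i⟫ * ⟪e st.2, b i⟫) * ⟪B (e st.1), B (e st.2)⟫)
      (⟪e st.1, e st.2⟫ * ⟪B (e st.1), B (e st.2)⟫) := by
    intro st
    have h := (b.hasSum_inner_mul_inner (e st.1) (e st.2)).mul_right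
      ⟪B (e st.1), B (e st.2)⟫
    refine h.congr_fun fun i => ?_
    rw [real_inner_comm (b i) (e st.2)]
  have htot := hasSum_sum (s := (Finset.univ : Finset (ι × ι))) (fun st _ => hterm st)
  have hval : ∑ st : ι × ι, ⟪e st.1, e st.2⟫ * ⟪B (e st.1), B (e st.2)⟫
      = ∑ s, ‖B (e s)‖ ^ 2 := by
    rw [Fintype.sum_prod_type]
    refine Finset.sum_congr rfl fun s _ => ?_
    have h2 : ∀ t : ι, ⟪e s, e t⟫ * ⟪B (e s), B (e t)⟫
        = if t = s then ‖B (e s)‖ ^ 2 else 0 := by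
      intro t
      rw [orthonormal_iff_ite.mp he s t]
      by_cases h : s = t
      · subst h; simp [real_inner_self_eq_norm_sq]
      · simp [h, Ne.symm h]
    rw [Finset.sum_congr rfl fun t _ => h2 t, Finset.sum_ite_eq' Finset.univ s]
    simp
  rw [hval] at htot
  exact htot.congr_fun fun i => expand i

lemma hsNormSq_comp_projSpan {ι : Type*} [Fintype ι] (e : ι → H) (he : Orthonormal ℝ e)
    (B : H →L[ℝ] H) :
    hsNormSq (B ∘L proj (span ℝ (Set.range e))) = ENNReal.ofReal (∑ s, ‖B (e s)‖ ^ 2) := by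
  have hsum := hasSum_normSq_basis ((exists_hilbertBasis ℝ H).choose_spec.choose) e he B
  have h1 : hsNormSq (B ∘L proj (span ℝ (Set.range e)))
      = ∑' i : (exists_hilbertBasis ℝ H).choose,
        ENNReal.ofReal (‖B (proj (span ℝ (Set.range e))
          ((exists_hilbertBasis ℝ H).choose_spec.choose i))‖ ^ 2) := by
    unfold hsNormSq
    refine tsum_congr fun i => ?_
    rw [← ENNReal.ofReal_coe_nnreal, coe_nnnorm, ← ENNReal.ofReal_pow (norm_nonneg _)]
    rfl
  rw [h1, ← ENNReal.ofReal_tsum_of_nonneg (fun i => sq_nonneg _) hsum.summable, hsum.tsum_eq]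

lemma dF_sq_span {ι : Type*} [Fintype ι] (e : ι → H) (he : Orthonormal ℝ e)
    (W : Submodule ℝ H) :
    dF (span ℝ (Set.range e)) W ^ 2 = ∑ s, ‖proj Wᗮ (e s)‖ ^ 2 := by
  rw [dF, hsNorm, Real.sq_sqrt ENNReal.toReal_nonneg, hsNormSq_comp_projSpan e he,
    ENNReal.toReal_ofReal (Finset.sum_nonneg fun s _ => sq_nonneg _)]

lemma sum_set_Icc {M : Type*} [AddCommMonoid M] (a b : ℕ) (g : ℕ → M) :
    ∑ s : (Set.Icc a b : Set ℕ), g s = ∑ i ∈ Finset.Icc a b, g i := by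
  classical
  exact (Finset.sum_subtype (Finset.Icc a b) (fun x => by simp) g).symm

lemma orthonormal_restrict {a b c d : ℕ} (f : ℕ → H)
    (hf : ∀ i ∈ Set.Icc c d, ∀ j ∈ Set.Icc c d, ⟪f i, f j⟫ = if i = j then (1:ℝ) else 0)
    (hsub : Set.Icc a b ⊆ Set.Icc c d) :
    Orthonormal ℝ (fun s : (Set.Icc a b : Set ℕ) => f s) := by
  classical
  rw [orthonormal_iff_ite]
  intro i j
  rw [hf i (hsub i.2) j (hsub j.2)]
  by_cases h : i = j
  · simp [h]
  · rw [if_neg (fun hc => h (Subtype.ext hc)), if_neg h]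

lemma normSq_proj_orthogonal_span {ι : Type*} [Fintype ι] (f : ι → H) (hf : Orthonormal ℝ f)
    (x : H) :
    ‖proj (span ℝ (Set.range f))ᗮ x‖ ^ 2 = ‖x‖ ^ 2 - ∑ s, ⟪f s, x⟫ ^ 2 := by
  haveI : FiniteDimensional ℝ (span ℝ (Set.range f)) :=
    FiniteDimensional.span_of_finite ℝ (Set.finite_range f)
  rw [normSq_proj_orthogonal', proj_span_apply f hf]
  congr 1
  rw [← real_inner_self_eq_norm_sq, hf.inner_sum]
  simp [sq]

lemma sum_Icc_swap (k : ℕ) (g : ℕ → ℕ → ℝ) :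
    ∑ m ∈ Finset.Icc 1 k, ∑ l ∈ Finset.Icc 1 m, g l m
      = ∑ l ∈ Finset.Icc 1 k, ∑ m ∈ Finset.Icc l k, g l m := by
  rw [Finset.sum_sigma', Finset.sum_sigma']
  refine Finset.sum_nbij' (fun x => ⟨x.2, x.1⟩) (fun x => ⟨x.2, x.1⟩) ?_ ?_ ?_ ?_ ?_ <;>
    simp only [Finset.mem_sigma, Finset.mem_Icc] <;> intros <;> first | omega | trivial


/-- With `q₁, …, q_p` the Gram–Schmidt orthonormalization of the projections
`P_Φ η₁, …, P_Φ η_p` of the orthonormal vectors `η₁, …, η_r` onto the `n`-dimensional subspace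
`Φ` (`p = min n r`), for `1 ≤ j ≤ k ≤ p` we have
`d_F(span{q_j..q_k}, span{η_j..η_k})² ≤ d_F(span{η₁..η_{j−1}}, Φ)² + d_F(span{η₁..η_k}, Φ)²`. -/
theorem stmt1 {H : Type*} [NormedAddCommGroup H] [InnerProductSpace ℝ H] [CompleteSpace H]
    (r n : ℕ) (hr : 1 ≤ r) (η : ℕ → H)
    (hη : ∀ i ∈ Set.Icc 1 r, ∀ j ∈ Set.Icc 1 r, ⟪η i, η j⟫ = if i = j then (1 : ℝ) else 0)
    (Φ : Submodule ℝ H) (hΦfd : FiniteDimensional ℝ Φ) (hΦn : Module.finrank ℝ Φ = n)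
    (hlin : LinearIndependent ℝ (fun i : Set.Icc 1 (min n r) => proj Φ (η i.1)))
    (q : ℕ → H)
    (hq : ∀ i ∈ Set.Icc 1 (min n r),
      q i = ‖proj Φ (η i) - ∑ l ∈ Finset.Ico 1 i, ⟪q l, η i⟫ • q l‖⁻¹ •
            (proj Φ (η i) - ∑ l ∈ Finset.Ico 1 i, ⟪q l, η i⟫ • q l))
    (j k : ℕ) (hj : 1 ≤ j) (hjk : j ≤ k) (hk : k ≤ min n r) :
    dF (span ℝ (q '' Set.Icc j k)) (span ℝ (η '' Set.Icc j k)) ^ 2 ≤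
      dF (span ℝ (η '' Set.Icc 1 (j - 1))) Φ ^ 2 + dF (span ℝ (η '' Set.Icc 1 k)) Φ ^ 2 := by
  classical
  haveI := hΦfd
  haveI : HasOrthogonalProjection Φ := inferInstance
  set p := min n r with hp
  have hpr : p ≤ r := min_le_right n r
  have main : ∀ m, m ∈ Set.Icc 1 p →
      q m ∈ Φ ∧ ‖q m‖ = 1 ∧ (∀ l, 1 ≤ l → l < m → ⟪q l, q m⟫ = 0) ∧
      q m ∈ span ℝ ((fun i => proj Φ (η i)) '' Set.Icc 1 m) ∧
      proj Φ (η m) = ∑ l ∈ Finset.Icc 1 m, ⟪q l, η m⟫ • q l := by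
    intro m
    induction m using Nat.strong_induction_on with
    | _ m IH =>
    intro hm
    obtain ⟨hm1, hmp⟩ := hm
    have IH' : ∀ l, 1 ≤ l → l < m →
        q l ∈ Φ ∧ ‖q l‖ = 1 ∧ (∀ l', 1 ≤ l' → l' < l → ⟪q l', q l⟫ = 0) ∧
        q l ∈ span ℝ ((fun i => proj Φ (η i)) '' Set.Icc 1 l) ∧
        proj Φ (η l) = ∑ l' ∈ Finset.Icc 1 l, ⟪q l', η l⟫ • q l' :=
      fun l hl1 hlm => IH l hlm ⟨hl1, le_trans (le_of_lt hlm) hmp⟩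
    have horto : ∀ l l', 1 ≤ l → l < m → 1 ≤ l' → l' < m →
        ⟪q l, q l'⟫ = if l = l' then (1:ℝ) else 0 := by
      intro l l' hl1 hlm hl'1 hl'm
      rcases lt_trichotomy l l' with h | h | h
      · rw [if_neg (Nat.ne_of_lt h), (IH' l' hl'1 hl'm).2.2.1 l hl1 h]
      · subst h
        rw [if_pos rfl, real_inner_self_eq_norm_sq, (IH' l hl1 hlm).2.1]
        norm_num
      · rw [if_neg (Nat.ne_of_gt h), real_inner_comm, (IH' l hl1 hlm).2.2.1 l' hl'1 h]
    set w := ∑ l ∈ Finset.Ico 1 m, ⟪q l, η m⟫ • q l with hw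
    set vt := proj Φ (η m) - w with hvt
    have hqm : q m = ‖vt‖⁻¹ • vt := hq m ⟨hm1, hmp⟩
    have hwmem : w ∈ span ℝ ((fun i => proj Φ (η i)) '' (Set.Icc 1 p ∩ Set.Iio m)) := by
      refine Submodule.sum_mem _ fun l hl => Submodule.smul_mem _ _ ?_
      rw [Finset.mem_Ico] at hl
      refine Submodule.span_mono (Set.image_mono ?_) ((IH' l hl.1 hl.2).2.2.2.1)
      intro a ha
      exact ⟨⟨ha.1, le_trans ha.2 (le_trans (le_of_lt hl.2) hmp)⟩, lt_of_le_of_lt ha.2 hl.2⟩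
    have hvt0 : vt ≠ 0 := by
      intro h0
      have hvm : proj Φ (η m) = w := by
        have := sub_eq_zero.mp (hvt ▸ h0)
        exact this
      have hx := hlin.notMem_span_image
        (s := {i : (Set.Icc 1 p : Set ℕ) | (i : ℕ) < m}) (x := ⟨m, hm1, hmp⟩)
        (by simp)
      apply hx
      have himg : (fun i : (Set.Icc 1 p : Set ℕ) => proj Φ (η i.1)) ''
          {i : (Set.Icc 1 p : Set ℕ) | (i : ℕ) < m}
          = (fun i => proj Φ (η i)) '' (Set.Icc 1 p ∩ Set.Iio m) := by
        ext y
        constructor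
        · rintro ⟨⟨i, hi⟩, him, rfl⟩; exact ⟨i, ⟨hi, him⟩, rfl⟩
        · rintro ⟨i, ⟨hi, him⟩, rfl⟩; exact ⟨⟨i, hi⟩, him, rfl⟩
      rw [himg]
      show proj Φ (η m) ∈ _
      rw [hvm]
      exact hwmem
    have hnvt : ‖vt‖ ≠ 0 := norm_ne_zero_iff.mpr hvt0
    have hqmPhi : q m ∈ Φ := by
      rw [hqm]
      refine Submodule.smul_mem _ _ (Submodule.sub_mem _ (proj_mem Φ (η m)) ?_)
      exact Submodule.sum_mem _ fun l hl => Submodule.smul_mem _ _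
        (IH' l (Finset.mem_Ico.mp hl).1 (Finset.mem_Ico.mp hl).2).1
    have hqmnorm : ‖q m‖ = 1 := by
      rw [hqm, norm_smul, norm_inv, norm_norm, inv_mul_cancel₀ hnvt]
    have hinner_vm : ∀ l, 1 ≤ l → l < m → ⟪q l, proj Φ (η m)⟫ = ⟪q l, η m⟫ :=
      fun l hl1 hlm => inner_proj_eq Φ (IH' l hl1 hlm).1 (η m)
    have hinner_w : ∀ l, 1 ≤ l → l < m → ⟪q l, w⟫ = ⟪q l, η m⟫ := by
      intro l hl1 hlm
      rw [hw, inner_sum, Finset.sum_eq_single l]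
      · rw [real_inner_smul_right, horto l l hl1 hlm hl1 hlm, if_pos rfl, mul_one]
      · intro l' hl' hne
        rw [real_inner_smul_right,
          horto l l' hl1 hlm (Finset.mem_Ico.mp hl').1 (Finset.mem_Ico.mp hl').2,
          if_neg (fun hc => hne hc.symm), mul_zero]
      · intro h; exact absurd (Finset.mem_Ico.mpr ⟨hl1, hlm⟩) h
    have hc : ∀ l, 1 ≤ l → l < m → ⟪q l, q m⟫ = 0 := by
      intro l hl1 hlm
      rw [hqm, real_inner_smul_right, hvt, inner_sub_right, hinner_vm l hl1 hlm,
        hinner_w l hl1 hlm, sub_self, mul_zero]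
    have hqmw : ⟪q m, w⟫ = 0 := by
      rw [hw, inner_sum]
      refine Finset.sum_eq_zero fun l hl => ?_
      rw [real_inner_smul_right, real_inner_comm (q l) (q m),
        hc l (Finset.mem_Ico.mp hl).1 (Finset.mem_Ico.mp hl).2, mul_zero]
    have hqmvt : ⟪q m, vt⟫ = ‖vt‖ := by
      rw [hqm, real_inner_smul_left, real_inner_self_eq_norm_sq, sq]
      rw [← mul_assoc, inv_mul_cancel₀ hnvt, one_mul]
    have hqmeta : ⟪q m, η m⟫ = ‖vt‖ := by
      have h1 : ⟪q m, proj Φ (η m)⟫ = ⟪q m, η m⟫ := inner_proj_eq Φ hqmPhi (η m)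
      have h2 : proj Φ (η m) = vt + w := by rw [hvt, sub_add_cancel]
      rw [← h1, h2, inner_add_right, hqmw, add_zero, hqmvt]
    have hd : proj Φ (η m) = ∑ l ∈ Finset.Icc 1 m, ⟪q l, η m⟫ • q l := by
      have hsplit : Finset.Icc 1 m = insert m (Finset.Ico 1 m) := (Finset.Ico_insert_right hm1).symm
      rw [hsplit, Finset.sum_insert (by simp)]
      have h3 : ⟪q m, η m⟫ • q m = vt := by
        rw [hqmeta, hqm, smul_smul, mul_inv_cancel₀ hnvt, one_smul]
      rw [h3, ← hw, hvt, sub_add_cancel]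
    have he : q m ∈ span ℝ ((fun i => proj Φ (η i)) '' Set.Icc 1 m) := by
      rw [hqm]
      refine Submodule.smul_mem _ _ (Submodule.sub_mem _ ?_ ?_)
      · exact subset_span ⟨m, ⟨hm1, le_refl m⟩, rfl⟩
      · refine Submodule.span_mono (Set.image_mono ?_) hwmem
        intro a ha
        exact ⟨ha.1.1, le_of_lt ha.2⟩
    exact ⟨hqmPhi, hqmnorm, hc, he, hd⟩
  -- consequences of the Gram–Schmidt construction
  have hqorth : ∀ l ∈ Set.Icc 1 p, ∀ l' ∈ Set.Icc 1 p, l ≠ l' → ⟪q l, q l'⟫ = 0 := by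
    intro l hl l' hl' hne
    rcases lt_or_gt_of_ne hne with h | h
    · exact (main l' hl').2.2.1 l (Set.mem_Icc.mp hl).1 h
    · have := (main l hl).2.2.1 l' (Set.mem_Icc.mp hl').1 h
      rwa [real_inner_comm] at this
  have hr0 : ∀ l ∈ Set.Icc 1 p, ∀ m' ∈ Set.Icc 1 p, m' < l → ⟪q l, η m'⟫ = 0 := by
    intro l hl m' hm' hlt
    have h1 : ⟪q l, η m'⟫ = ⟪q l, proj Φ (η m')⟫ := (inner_proj_eq Φ (main l hl).1 (η m')).symm
    rw [h1, (main m' hm').2.2.2.2, inner_sum]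
    refine Finset.sum_eq_zero fun l' hl' => ?_
    have hl'm := Finset.mem_Icc.mp hl'
    rw [real_inner_smul_right,
      hqorth l hl l' (Set.mem_Icc.mpr ⟨hl'm.1, le_trans hl'm.2 (Set.mem_Icc.mp hm').2⟩)
        (by omega), mul_zero]
  have hvnorm : ∀ m' ∈ Set.Icc 1 p, ‖proj Φ (η m')‖ ^ 2
      = ∑ l ∈ Finset.Icc 1 m', ⟪q l, η m'⟫ ^ 2 := by
    intro m' hm'
    have hexp := (main m' hm').2.2.2.2
    calc ‖proj Φ (η m')‖ ^ 2 = ⟪proj Φ (η m'), proj Φ (η m')⟫ :=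
          (real_inner_self_eq_norm_sq _).symm
      _ = ⟪proj Φ (η m'), ∑ l ∈ Finset.Icc 1 m', ⟪q l, η m'⟫ • q l⟫ := by
          nth_rewrite 2 [hexp]
          rfl
      _ = ∑ l ∈ Finset.Icc 1 m', ⟪q l, η m'⟫ * ⟪proj Φ (η m'), q l⟫ := by
          rw [inner_sum]
          exact Finset.sum_congr rfl fun l _ => real_inner_smul_right _ _ _
      _ = ∑ l ∈ Finset.Icc 1 m', ⟪q l, η m'⟫ ^ 2 := by
          refine Finset.sum_congr rfl fun l hl => ?_
          have hlm := Finset.mem_Icc.mp hl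
          have hlp : l ∈ Set.Icc 1 p :=
            Set.mem_Icc.mpr ⟨hlm.1, le_trans hlm.2 (Set.mem_Icc.mp hm').2⟩
          have h2 : ⟪proj Φ (η m'), q l⟫ = ⟪q l, η m'⟫ := by
            rw [real_inner_comm]
            exact inner_proj_eq Φ (main l hlp).1 (η m')
          rw [h2, sq]
  have hη1 : ∀ m' ∈ Set.Icc 1 r, ‖η m'‖ = 1 := by
    intro m' hm'
    have h1 := hη m' hm' m' hm'
    rw [if_pos rfl, real_inner_self_eq_norm_sq] at h1
    nlinarith [norm_nonneg (η m')]
  have hsub_jk_1p : Set.Icc j k ⊆ Set.Icc 1 p := Set.Icc_subset_Icc hj hk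
  have hsub_jk_1r : Set.Icc j k ⊆ Set.Icc 1 r := Set.Icc_subset_Icc hj (le_trans hk hpr)
  have hsub_1k_1r : Set.Icc 1 k ⊆ Set.Icc 1 r := Set.Icc_subset_Icc le_rfl (le_trans hk hpr)
  have hqON : Orthonormal ℝ (fun s : (Set.Icc j k : Set ℕ) => q s) := by
    rw [orthonormal_iff_ite]
    intro s t
    by_cases h : s = t
    · subst h
      rw [if_pos rfl, real_inner_self_eq_norm_sq, (main s (hsub_jk_1p s.2)).2.1]
      norm_num
    · rw [if_neg h]
      exact hqorth s (hsub_jk_1p s.2) t (hsub_jk_1p t.2) (fun hc => h (Subtype.ext hc))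
  have hηON : Orthonormal ℝ (fun s : (Set.Icc j k : Set ℕ) => η s) :=
    orthonormal_restrict η hη hsub_jk_1r
  have hηON2 : Orthonormal ℝ (fun s : (Set.Icc 1 k : Set ℕ) => η s) :=
    orthonormal_restrict η hη hsub_1k_1r
  set W := span ℝ (η '' Set.Icc j k) with hW
  have hLHS : dF (span ℝ (q '' Set.Icc j k)) W ^ 2
      = ∑ i ∈ Finset.Icc j k, ‖proj Wᗮ (q i)‖ ^ 2 := by
    rw [Set.image_eq_range q (Set.Icc j k), dF_sq_span _ hqON]
    exact sum_set_Icc j k (fun i => ‖proj Wᗮ (q i)‖ ^ 2)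
  have hterm1 : ∀ i ∈ Finset.Icc j k, ‖proj Wᗮ (q i)‖ ^ 2
      = 1 - ∑ m' ∈ Finset.Icc j k, ⟪q i, η m'⟫ ^ 2 := by
    intro i hi
    have hi' := Finset.mem_Icc.mp hi
    have h1 : W = span ℝ (Set.range (fun s : (Set.Icc j k : Set ℕ) => η s)) := by
      rw [hW, Set.image_eq_range]
    have h2 : ∑ s : (Set.Icc j k : Set ℕ), ⟪η ↑s, q i⟫ ^ 2
        = ∑ m' ∈ Finset.Icc j k, ⟪η m', q i⟫ ^ 2 := sum_set_Icc j k (fun m' => ⟪η m', q i⟫ ^ 2)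
    rw [h1, normSq_proj_orthogonal_span _ hηON (q i), h2,
      (main i (hsub_jk_1p (Set.mem_Icc.mpr ⟨hi'.1, hi'.2⟩))).2.1, one_pow]
    congr 1
    exact Finset.sum_congr rfl fun m' _ => by rw [real_inner_comm]
  have hRHS : dF (span ℝ (η '' Set.Icc 1 k)) Φ ^ 2
      = ∑ m' ∈ Finset.Icc 1 k, (1 - ∑ l ∈ Finset.Icc 1 m', ⟪q l, η m'⟫ ^ 2) := by
    have h2 : ∑ s : (Set.Icc 1 k : Set ℕ), ‖proj Φᗮ (η ↑s)‖ ^ 2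
        = ∑ m' ∈ Finset.Icc 1 k, ‖proj Φᗮ (η m')‖ ^ 2 := sum_set_Icc 1 k (fun m' => ‖proj Φᗮ (η m')‖ ^ 2)
    rw [Set.image_eq_range η (Set.Icc 1 k), dF_sq_span _ hηON2, h2]
    refine Finset.sum_congr rfl fun m' hm' => ?_
    have hm'' := Finset.mem_Icc.mp hm'
    have hm'p : m' ∈ Set.Icc 1 p := Set.mem_Icc.mpr ⟨hm''.1, le_trans hm''.2 hk⟩
    rw [normSq_proj_orthogonal' Φ (η m'), hvnorm m' hm'p,
      hη1 m' (Set.mem_Icc.mpr ⟨hm''.1, le_trans hm''.2 (le_trans hk hpr)⟩), one_pow]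
  have hbessel : ∀ l, 1 ≤ l → l ≤ k → ∑ m' ∈ Finset.Icc l k, ⟪q l, η m'⟫ ^ 2 ≤ 1 := by
    intro l hl1 hlk
    have hlp : l ∈ Set.Icc 1 p := Set.mem_Icc.mpr ⟨hl1, le_trans hlk hk⟩
    have hsubl : Set.Icc l k ⊆ Set.Icc 1 r := Set.Icc_subset_Icc hl1 (le_trans hk hpr)
    have hON := orthonormal_restrict η hη hsubl
    have hD := normSq_proj_orthogonal_span _ hON (q l)
    have h0 : (0:ℝ) ≤ ‖q l‖ ^ 2 - ∑ s : (Set.Icc l k : Set ℕ), ⟪η ↑s, q l⟫ ^ 2 := by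
      rw [← hD]
      exact sq_nonneg _
    have h2 : ∑ s : (Set.Icc l k : Set ℕ), ⟪η ↑s, q l⟫ ^ 2
        = ∑ m' ∈ Finset.Icc l k, ⟪η m', q l⟫ ^ 2 := sum_set_Icc l k (fun m' => ⟪η m', q l⟫ ^ 2)
    rw [h2, (main l hlp).2.1, one_pow] at h0
    have hflip : ∑ m' ∈ Finset.Icc l k, ⟪q l, η m'⟫ ^ 2
        = ∑ m' ∈ Finset.Icc l k, ⟪η m', q l⟫ ^ 2 :=
      Finset.sum_congr rfl fun m' _ => by rw [real_inner_comm]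
    linarith
  have hL : dF (span ℝ (q '' Set.Icc j k)) W ^ 2
      = ∑ i ∈ Finset.Icc j k, (1 - ∑ m' ∈ Finset.Icc i k, ⟪q i, η m'⟫ ^ 2) := by
    rw [hLHS]
    refine Finset.sum_congr rfl fun i hi => ?_
    rw [hterm1 i hi]
    have hi' := Finset.mem_Icc.mp hi
    congr 1
    refine (Finset.sum_subset (Finset.Icc_subset_Icc hi'.1 le_rfl) ?_).symm
    intro x hx hnx
    have hx' := Finset.mem_Icc.mp hx
    have hxi : x < i := by
      rcases Nat.lt_or_ge x i with h | h
      · exact h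
      · exact absurd (Finset.mem_Icc.mpr ⟨h, hx'.2⟩) hnx
    rw [hr0 i (hsub_jk_1p (Set.mem_Icc.mpr ⟨hi'.1, hi'.2⟩)) x
      (hsub_jk_1p (Set.mem_Icc.mpr ⟨hx'.1, hx'.2⟩)) hxi]
    norm_num
  have hR2 : ∑ m' ∈ Finset.Icc 1 k, (1 - ∑ l ∈ Finset.Icc 1 m', ⟪q l, η m'⟫ ^ 2)
      = ∑ l ∈ Finset.Icc 1 k, (1 - ∑ m' ∈ Finset.Icc l k, ⟪q l, η m'⟫ ^ 2) := by
    rw [Finset.sum_sub_distrib, Finset.sum_sub_distrib,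
      sum_Icc_swap k (fun l m' => ⟪q l, η m'⟫ ^ 2)]
  have hfin : ∑ i ∈ Finset.Icc j k, (1 - ∑ m' ∈ Finset.Icc i k, ⟪q i, η m'⟫ ^ 2)
      ≤ ∑ l ∈ Finset.Icc 1 k, (1 - ∑ m' ∈ Finset.Icc l k, ⟪q l, η m'⟫ ^ 2) := by
    refine Finset.sum_le_sum_of_subset_of_nonneg (Finset.Icc_subset_Icc hj le_rfl) ?_
    intro l hl _
    have hl' := Finset.mem_Icc.mp hl
    have := hbessel l hl'.1 hl'.2
    linarith
  calc dF (span ℝ (q '' Set.Icc j k)) W ^ 2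
      = ∑ i ∈ Finset.Icc j k, (1 - ∑ m' ∈ Finset.Icc i k, ⟪q i, η m'⟫ ^ 2) := hL
    _ ≤ ∑ l ∈ Finset.Icc 1 k, (1 - ∑ m' ∈ Finset.Icc l k, ⟪q l, η m'⟫ ^ 2) := hfin
    _ = ∑ m' ∈ Finset.Icc 1 k, (1 - ∑ l ∈ Finset.Icc 1 m', ⟪q l, η m'⟫ ^ 2) := hR2.symm
    _ = dF (span ℝ (η '' Set.Icc 1 k)) Φ ^ 2 := hRHS.symm
    _ ≤ dF (span ℝ (η '' Set.Icc 1 (j - 1))) Φ ^ 2 + dF (span ℝ (η '' Set.Icc 1 k)) Φ ^ 2 :=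
        le_add_of_nonneg_left (sq_nonneg _)


end
end

section
/- Under the stated operator setting, let 1 ≤ k ≤ r and let Φ be an n-dimensional subspace of H with n ≥ k, with Ritz values λ₁ ≥ ⋯ ≥ λ_n of T on Φ. Then (1 − d_2(span{η₁, …, η_k}, Φ)²) · μ_k ≤ λ_k ≤ μ_k. -/
open scoped RealInnerProductSpace ENNReal
open Submodule Filter

noncomputable section

variable {H : Type*} [NormedAddCommGroup H] [InnerProductSpace ℝ H] [CompleteSpace H]

set_option linter.unusedSectionVars false
set_option maxHeartbeats 1000000

lemma exists_perp (V : Submodule ℝ H) [FiniteDimensional ℝ V] {k : ℕ}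
    (hV : k ≤ Module.finrank ℝ V) (hk : 1 ≤ k) (c : ℕ → H) :
    ∃ v, v ∈ V ∧ v ≠ 0 ∧ ∀ i ∈ Finset.Icc 1 (k-1), ⟪c i, v⟫ = 0 := by
  let f : V →ₗ[ℝ] (Fin (k-1) → ℝ) :=
    { toFun := fun v i => ⟪c ((i : ℕ)+1), (v : H)⟫
      map_add' := by intro a b; funext i; simp [inner_add_right]
      map_smul' := by intro m a; funext i; simp [inner_smul_right] }
  have hker : LinearMap.ker f ≠ ⊥ := by
    intro hbot
    have hinj : Function.Injective f := LinearMap.ker_eq_bot.mp hbot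
    have h2 := LinearMap.finrank_le_finrank_of_injective hinj
    rw [Module.finrank_fin_fun] at h2
    omega
  obtain ⟨v, hv, hv0⟩ := Submodule.exists_mem_ne_zero_of_ne_bot hker
  refine ⟨(v : H), v.2, by simpa using hv0, ?_⟩
  intro i hi
  rw [Finset.mem_Icc] at hi
  have : f v = 0 := hv
  have h3 := congrFun this ⟨i - 1, by omega⟩
  simpa [f, Nat.sub_add_cancel hi.1] using h3

/-- orthonormality on Icc as stated in the theorem -/
def OrthoOn (e : ℕ → H) (m : ℕ) : Prop :=
  ∀ i ∈ Set.Icc 1 m, ∀ j ∈ Set.Icc 1 m, ⟪e i, e j⟫ = if i = j then (1:ℝ) else 0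

lemma OrthoOn.mono {e : ℕ → H} {m m' : ℕ} (h : OrthoOn e m) (hm : m' ≤ m) : OrthoOn e m' := by
  intro i hi j hj
  exact h i ⟨hi.1, hi.2.trans hm⟩ j ⟨hj.1, hj.2.trans hm⟩

lemma OrthoOn.inner_self {e : ℕ → H} {m : ℕ} (h : OrthoOn e m) {i : ℕ}
    (hi : i ∈ Finset.Icc 1 m) : ⟪e i, e i⟫ = 1 := by
  rw [Finset.mem_Icc] at hi
  simpa using h i hi i hi

-- the F map trick
lemma OrthoOn.repr {e : ℕ → H} {m : ℕ} (he : OrthoOn e m)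
    {x : H} (hx : x ∈ span ℝ (e '' Set.Icc 1 m)) :
    x = ∑ i ∈ Finset.Icc 1 m, ⟪e i, x⟫ • e i := by
  let F : H →ₗ[ℝ] H :=
    { toFun := fun y => y - ∑ i ∈ Finset.Icc 1 m, ⟪e i, y⟫ • e i
      map_add' := by
        intro a b
        simp only [inner_add_right, add_smul, Finset.sum_add_distrib]
        abel
      map_smul' := by
        intro c a
        simp only [inner_smul_right, RingHom.id_apply, smul_sub, Finset.smul_sum, smul_smul] }
  have hker : span ℝ (e '' Set.Icc 1 m) ≤ LinearMap.ker F := by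
    rw [Submodule.span_le]
    rintro _ ⟨j, hj, rfl⟩
    simp only [SetLike.mem_coe, LinearMap.mem_ker]
    show e j - ∑ i ∈ Finset.Icc 1 m, ⟪e i, e j⟫ • e i = 0
    rw [Finset.sum_eq_single j]
    · rw [he j hj j hj]; simp
    · intro i hi hij
      rw [Finset.mem_Icc] at hi
      rw [he i hi j hj, if_neg hij, zero_smul]
    · intro hj'
      exact absurd (Finset.mem_Icc.mpr hj) hj'
  have := hker hx
  simp only [LinearMap.mem_ker] at this
  have h2 : x - ∑ i ∈ Finset.Icc 1 m, ⟪e i, x⟫ • e i = 0 := this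
  exact (sub_eq_zero.mp h2)

lemma mem_orthogonal_span_of_inner {e : ℕ → H} {m : ℕ} {x : H}
    (h : ∀ i ∈ Finset.Icc 1 m, ⟪e i, x⟫ = 0) :
    x ∈ (span ℝ (e '' Set.Icc 1 m))ᗮ := by
  rw [Submodule.mem_orthogonal]
  intro u hu
  induction hu using Submodule.span_induction with
  | mem z hz =>
      obtain ⟨i, hi, rfl⟩ := hz
      exact h i (by simpa [Finset.mem_Icc] using hi)
  | zero => simp
  | add a b _ _ ha hb => simp [inner_add_left, ha, hb]
  | smul c a _ ha => simp [inner_smul_left, ha]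

lemma inner_sum_sum {e : ℕ → H} {m : ℕ} (he : OrthoOn e m) (c d : ℕ → ℝ) :
    ⟪∑ i ∈ Finset.Icc 1 m, c i • e i, ∑ j ∈ Finset.Icc 1 m, d j • e j⟫
      = ∑ i ∈ Finset.Icc 1 m, c i * d i := by
  rw [sum_inner]
  refine Finset.sum_congr rfl ?_
  intro i hi
  rw [inner_sum, Finset.sum_eq_single i]
  · rw [real_inner_smul_left, real_inner_smul_right, he.inner_self hi]
    ring
  · intro j hj hij
    rw [real_inner_smul_left, real_inner_smul_right,
      he i (by simpa [Finset.mem_Icc] using hi) j (by simpa [Finset.mem_Icc] using hj),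
      if_neg (Ne.symm hij)]
    ring
  · intro h'; exact absurd hi h'

lemma norm_sq_sum {e : ℕ → H} {m : ℕ} (he : OrthoOn e m) (c : ℕ → ℝ) :
    ‖∑ i ∈ Finset.Icc 1 m, c i • e i‖ ^ 2 = ∑ i ∈ Finset.Icc 1 m, c i ^ 2 := by
  rw [← real_inner_self_eq_norm_sq, inner_sum_sum he]
  exact Finset.sum_congr rfl fun i _ => (sq (c i)).symm

instance spanIcc_fd (e : ℕ → H) (m : ℕ) :
    FiniteDimensional ℝ (span ℝ (e '' Set.Icc 1 m)) :=
  FiniteDimensional.span_of_finite ℝ ((Set.finite_Icc 1 m).image e)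

instance spanIcc_hop (e : ℕ → H) (m : ℕ) :
    HasOrthogonalProjection (span ℝ (e '' Set.Icc 1 m)) := by
  haveI : CompleteSpace (span ℝ (e '' Set.Icc 1 m)) :=
    FiniteDimensional.complete ℝ _
  infer_instance

lemma proj_span_apply_s2 {e : ℕ → H} {m : ℕ} (he : OrthoOn e m) (x : H) :
    proj (span ℝ (e '' Set.Icc 1 m)) x = ∑ i ∈ Finset.Icc 1 m, ⟪e i, x⟫ • e i := by
  rw [proj_apply]
  have hmem : (∑ i ∈ Finset.Icc 1 m, ⟪e i, x⟫ • e i) ∈ span ℝ (e '' Set.Icc 1 m) := by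
    refine Submodule.sum_mem _ ?_
    intro i hi
    exact Submodule.smul_mem _ _ (Submodule.subset_span ⟨i, by simpa [Finset.mem_Icc] using hi, rfl⟩)
  have horth : x - (∑ i ∈ Finset.Icc 1 m, ⟪e i, x⟫ • e i) ∈ (span ℝ (e '' Set.Icc 1 m))ᗮ := by
    apply mem_orthogonal_span_of_inner
    intro i hi
    rw [inner_sub_right, inner_sum]
    rw [Finset.sum_eq_single i]
    · rw [real_inner_smul_right, he.inner_self hi]; ring
    · intro j hj hij
      rw [real_inner_smul_right,
        he i (by simpa [Finset.mem_Icc] using hi) j (by simpa [Finset.mem_Icc] using hj),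
        if_neg (Ne.symm hij)]
      ring
    · intro h'; exact absurd hi h'
  exact eq_starProjection_of_mem_of_inner_eq_zero hmem
    (fun w hw => (Submodule.mem_orthogonal' _ _).mp horth w hw)

lemma finrank_span_Icc {e : ℕ → H} {m : ℕ} (he : OrthoOn e m) :
    Module.finrank ℝ (span ℝ (e '' Set.Icc 1 m)) = m := by
  have ho : Orthonormal ℝ (fun i : (Set.Icc 1 m : Set ℕ) => e i) := by
    rw [orthonormal_iff_ite]
    intro i j
    have h := he i i.2 j j.2
    rw [h]
    by_cases hij : i = j
    · simp [hij]
    · rw [if_neg hij, if_neg (fun hc => hij (Subtype.ext hc))]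
  have hrange : Set.range (fun i : (Set.Icc 1 m : Set ℕ) => e i) = e '' Set.Icc 1 m := by
    ext y; simp [Set.mem_image]
  rw [← hrange, finrank_span_eq_card ho.linearIndependent]
  simp [Nat.card_Icc]

/-- Rayleigh–Ritz eigenvalue bounds:
`(1 − d₂(span{η₁..η_k}, Φ)²) μ_k ≤ λ_k ≤ μ_k`. -/
theorem stmt2 {H : Type*} [NormedAddCommGroup H] [InnerProductSpace ℝ H] [CompleteSpace H]
    (T : H →L[ℝ] H)
    (hTsa : ∀ x y : H, ⟪T x, y⟫ = ⟪x, T y⟫)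
    (hTpos : ∀ u : H, 0 ≤ ⟪u, T u⟫)
    (r : ℕ) (hr : 1 ≤ r) (η : ℕ → H) (μ : ℕ → ℝ)
    (hη : ∀ i ∈ Set.Icc 1 r, ∀ j ∈ Set.Icc 1 r, ⟪η i, η j⟫ = if i = j then (1 : ℝ) else 0)
    (hTeig : ∀ i ∈ Set.Icc 1 r, T (η i) = μ i • η i)
    (hμmono : ∀ i ∈ Set.Icc 1 (r + 1), ∀ j ∈ Set.Icc 1 (r + 1), i ≤ j → μ j ≤ μ i)
    (hμr : 0 < μ r) (hμr1 : 0 ≤ μ (r + 1))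
    (hTinv : ∀ w ∈ (span ℝ (η '' Set.Icc 1 r))ᗮ, T w ∈ (span ℝ (η '' Set.Icc 1 r))ᗮ)
    (hTres : ∀ w ∈ (span ℝ (η '' Set.Icc 1 r))ᗮ, ⟪w, T w⟫ ≤ μ (r + 1) * ‖w‖ ^ 2)
    (n : ℕ) (Φ : Submodule ℝ H) (hΦfd : FiniteDimensional ℝ Φ) (hΦn : Module.finrank ℝ Φ = n)
    (lam : ℕ → ℝ) (γ : ℕ → H)
    (hγ : ∀ i ∈ Set.Icc 1 n, ∀ j ∈ Set.Icc 1 n, ⟪γ i, γ j⟫ = if i = j then (1 : ℝ) else 0)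
    (hγspan : span ℝ (γ '' Set.Icc 1 n) = Φ)
    (hγeig : ∀ i ∈ Set.Icc 1 n, proj Φ (T (γ i)) = lam i • γ i)
    (hlam : ∀ i ∈ Set.Icc 1 n, ∀ j ∈ Set.Icc 1 n, i ≤ j → lam j ≤ lam i)
    (k : ℕ) (hk1 : 1 ≤ k) (hkr : k ≤ r) (hkn : k ≤ n) :
    (1 - d2 (span ℝ (η '' Set.Icc 1 k)) Φ ^ 2) * μ k ≤ lam k ∧ lam k ≤ μ k := by
  classical
  haveI : CompleteSpace Φ := FiniteDimensional.complete ℝ Φ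
  have hηO : OrthoOn η r := hη
  have hγO : OrthoOn γ n := hγ
  have hηOk : OrthoOn η k := hηO.mono hkr
  have hγOk : OrthoOn γ k := hγO.mono hkn
  set E := span ℝ (η '' Set.Icc 1 r) with hE
  set Ek := span ℝ (η '' Set.Icc 1 k) with hEkdef
  -- μ values positivity / monotonicity facts
  have hμpos : ∀ i ∈ Finset.Icc 1 r, 0 < μ i := by
    intro i hi
    rw [Finset.mem_Icc] at hi
    have := hμmono i (Set.mem_Icc.mpr ⟨hi.1, by omega⟩) r (Set.mem_Icc.mpr ⟨hr, by omega⟩) hi.2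
    linarith
  have hμk : 0 < μ k := hμpos k (Finset.mem_Icc.mpr ⟨hk1, hkr⟩)
  have hμler : μ (r+1) ≤ μ k :=
    hμmono k (Set.mem_Icc.mpr ⟨hk1, by omega⟩) (r+1) (Set.mem_Icc.mpr ⟨by omega, le_refl _⟩)
      (by omega)
  -- MASTER SPECTRAL DECOMPOSITION
  -- b x := orthogonal part
  have master : ∀ x : H,
      ⟪x, T x⟫ = (∑ i ∈ Finset.Icc 1 r, μ i * ⟪η i, x⟫ ^ 2)
        + ⟪x - proj E x, T (x - proj E x)⟫
      ∧ ‖x‖ ^ 2 = (∑ i ∈ Finset.Icc 1 r, ⟪η i, x⟫ ^ 2) + ‖x - proj E x‖ ^ 2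
      ∧ (x - proj E x) ∈ Eᗮ := by
    intro x
    set a : H := ∑ i ∈ Finset.Icc 1 r, ⟪η i, x⟫ • η i with ha
    have hproj : proj E x = a := proj_span_apply_s2 hηO x
    have hb : x - proj E x ∈ Eᗮ := by
      rw [proj_apply]
      exact sub_starProjection_mem_orthogonal x
    set b : H := x - proj E x with hbdef
    have hxab : x = a + b := by rw [hbdef, hproj]; abel
    have haE : a ∈ E := by
      refine Submodule.sum_mem _ ?_
      intro i hi
      exact Submodule.smul_mem _ _
        (Submodule.subset_span ⟨i, by simpa [Finset.mem_Icc] using hi, rfl⟩)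
    have hTa : T a = ∑ i ∈ Finset.Icc 1 r, (⟪η i, x⟫ * μ i) • η i := by
      rw [ha, map_sum]
      refine Finset.sum_congr rfl ?_
      intro i hi
      rw [Finset.mem_Icc] at hi
      rw [ContinuousLinearMap.map_smul, hTeig i (Set.mem_Icc.mpr hi), smul_smul]
    have hTaE : T a ∈ E := by
      rw [hTa]
      refine Submodule.sum_mem _ ?_
      intro i hi
      exact Submodule.smul_mem _ _
        (Submodule.subset_span ⟨i, by simpa [Finset.mem_Icc] using hi, rfl⟩)
    have hTbE : T b ∈ Eᗮ := hTinv b hb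
    have haTb : ⟪a, T b⟫ = 0 := by
      have := (Submodule.mem_orthogonal E (T b)).mp hTbE a haE
      exact this
    have hbTa : ⟪b, T a⟫ = 0 := (Submodule.mem_orthogonal' E b).mp hb (T a) hTaE
    have hab : ⟪a, b⟫ = 0 := (Submodule.mem_orthogonal E b).mp hb a haE
    have haTa : ⟪a, T a⟫ = ∑ i ∈ Finset.Icc 1 r, μ i * ⟪η i, x⟫ ^ 2 := by
      rw [ha, hTa, inner_sum_sum hηO]
      refine Finset.sum_congr rfl ?_
      intro i _
      ring
    have hnorma : ‖a‖ ^ 2 = ∑ i ∈ Finset.Icc 1 r, ⟪η i, x⟫ ^ 2 := norm_sq_sum hηO _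
    refine ⟨?_, ?_, hb⟩
    · conv_lhs => rw [hxab]
      rw [map_add, inner_add_left, inner_add_right, inner_add_right, haTa, haTb, hbTa]
      ring
    · conv_lhs => rw [hxab]
      rw [norm_add_sq_real, hab, hnorma]
      ring
  -- membership of γ in Φ
  have hγmem : ∀ i ∈ Set.Icc 1 n, γ i ∈ Φ := fun i hi =>
    hγspan ▸ Submodule.subset_span ⟨i, hi, rfl⟩
  -- orthogonal complement piece of T v against v ∈ Φ vanishes
  have hprojsub : ∀ v ∈ Φ, ∀ y : H, ⟪v, y⟫ = ⟪v, proj Φ y⟫ := by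
    intro v hv y
    have h1 : y - proj Φ y ∈ Φᗮ := by
      rw [proj_apply]
      exact sub_starProjection_mem_orthogonal y
    have h2 : ⟪v, y - proj Φ y⟫ = 0 := by
      have := (Submodule.mem_orthogonal Φ (y - proj Φ y)).mp h1 v hv
      exact this
    rw [inner_sub_right] at h2
    linarith
  -- Φ-side computation
  have phiSide : ∀ v ∈ Φ,
      ⟪v, T v⟫ = ∑ i ∈ Finset.Icc 1 n, lam i * ⟪γ i, v⟫ ^ 2
      ∧ ‖v‖ ^ 2 = ∑ i ∈ Finset.Icc 1 n, ⟪γ i, v⟫ ^ 2 := by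
    intro v hv
    have hvrep : v = ∑ i ∈ Finset.Icc 1 n, ⟪γ i, v⟫ • γ i := hγO.repr (hγspan ▸ hv)
    have hTvproj : proj Φ (T v) = ∑ i ∈ Finset.Icc 1 n, (⟪γ i, v⟫ * lam i) • γ i := by
      conv_lhs => rw [hvrep]
      rw [map_sum, map_sum]
      refine Finset.sum_congr rfl ?_
      intro i hi
      rw [Finset.mem_Icc] at hi
      rw [ContinuousLinearMap.map_smul, ContinuousLinearMap.map_smul,
        hγeig i (Set.mem_Icc.mpr hi), smul_smul]
    constructor
    · rw [hprojsub v hv (T v), hTvproj]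
      conv_lhs => rw [hvrep]
      rw [inner_sum_sum hγO]
      exact Finset.sum_congr rfl fun i _ => by rw [← hvrep]; ring
    · conv_lhs => rw [hvrep, norm_sq_sum hγO]
  -- value of lam k as a Rayleigh quotient
  have hlamk : ⟪γ k, T (γ k)⟫ = lam k := by
    rw [hprojsub (γ k) (hγmem k (Set.mem_Icc.mpr ⟨hk1, hkn⟩)) (T (γ k)),
      hγeig k (Set.mem_Icc.mpr ⟨hk1, hkn⟩), real_inner_smul_right,
      hγO.inner_self (Finset.mem_Icc.mpr ⟨hk1, hkn⟩)]
    ring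
  have hlamk0 : 0 ≤ lam k := hlamk ▸ hTpos (γ k)
  -- UPPER BOUND
  have hupper : lam k ≤ μ k := by
    have hfr : Module.finrank ℝ (span ℝ (γ '' Set.Icc 1 k)) = k := finrank_span_Icc hγOk
    obtain ⟨w, hwmem, hw0, hwperp⟩ :=
      exists_perp (span ℝ (γ '' Set.Icc 1 k)) (le_of_eq hfr.symm) hk1 η
    have hwΦ : w ∈ Φ := by
      have hle : span ℝ (γ '' Set.Icc 1 k) ≤ Φ := by
        rw [← hγspan]
        exact Submodule.span_mono (Set.image_mono (Set.Icc_subset_Icc_right hkn))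
      exact hle hwmem
    have hwrep : w = ∑ i ∈ Finset.Icc 1 k, ⟪γ i, w⟫ • γ i := hγOk.repr hwmem
    have hdzero : ∀ j ∈ Finset.Icc 1 n, k < j → ⟪γ j, w⟫ = 0 := by
      intro j hj hjk
      rw [Finset.mem_Icc] at hj
      conv_lhs => rw [hwrep]
      rw [inner_sum]
      refine Finset.sum_eq_zero ?_
      intro i hi
      rw [Finset.mem_Icc] at hi
      rw [real_inner_smul_right,
        hγ j (Set.mem_Icc.mpr hj) i (Set.mem_Icc.mpr ⟨hi.1, hi.2.trans hkn⟩), if_neg (by omega)]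
      ring
    obtain ⟨hTw, hnw⟩ := phiSide w hwΦ
    have h1 : lam k * ‖w‖ ^ 2 ≤ ⟪w, T w⟫ := by
      rw [hTw, hnw, Finset.mul_sum]
      refine Finset.sum_le_sum ?_
      intro i hi
      rw [Finset.mem_Icc] at hi
      by_cases hik : i ≤ k
      · have hlk : lam k ≤ lam i :=
          hlam i (Set.mem_Icc.mpr ⟨hi.1, hi.2⟩) k (Set.mem_Icc.mpr ⟨hk1, hkn⟩) hik
        nlinarith [sq_nonneg (⟪γ i, w⟫)]
      · rw [hdzero i (Finset.mem_Icc.mpr hi) (by omega)]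
        simp
    obtain ⟨hm1, hm2, hm3⟩ := master w
    have hb1 : ⟪w - proj E w, T (w - proj E w)⟫ ≤ μ (r+1) * ‖w - proj E w‖ ^ 2 := hTres _ hm3
    have hsum : ∑ i ∈ Finset.Icc 1 r, μ i * ⟪η i, w⟫ ^ 2
        ≤ ∑ i ∈ Finset.Icc 1 r, μ k * ⟪η i, w⟫ ^ 2 := by
      refine Finset.sum_le_sum ?_
      intro i hi
      rw [Finset.mem_Icc] at hi
      by_cases hik : i < k
      · rw [hwperp i (Finset.mem_Icc.mpr ⟨hi.1, by omega⟩)]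
        simp
      · have hmuik : μ i ≤ μ k :=
          hμmono k (Set.mem_Icc.mpr ⟨hk1, by omega⟩) i (Set.mem_Icc.mpr ⟨hi.1, by omega⟩)
            (by omega)
        nlinarith [sq_nonneg (⟪η i, w⟫)]
    have h2 : ⟪w, T w⟫ ≤ μ k * ‖w‖ ^ 2 := by
      rw [hm1]
      have hb2 : μ (r+1) * ‖w - proj E w‖^2 ≤ μ k * ‖w - proj E w‖^2 := by
        nlinarith [sq_nonneg ‖w - proj E w‖]
      calc (∑ i ∈ Finset.Icc 1 r, μ i * ⟪η i, w⟫ ^ 2)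
            + ⟪w - proj E w, T (w - proj E w)⟫
          ≤ (∑ i ∈ Finset.Icc 1 r, μ k * ⟪η i, w⟫ ^ 2) + μ k * ‖w - proj E w‖^2 := by linarith
        _ = μ k * ‖w‖^2 := by rw [hm2, ← Finset.mul_sum]; ring
    have hw2 : 0 < ‖w‖ ^ 2 := pow_pos (norm_pos_iff.mpr hw0) 2
    nlinarith
  -- LOWER BOUND
  refine ⟨?_, hupper⟩
  set δ := d2 Ek Φ with hδ
  have hδeq : δ = ‖(proj Φᗮ) ∘L (proj Ek)‖ := rfl
  by_cases hcase : 1 - δ ^ 2 ≤ 0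
  · calc (1 - δ^2) * μ k ≤ 0 := mul_nonpos_of_nonpos_of_nonneg hcase (le_of_lt hμk)
      _ ≤ lam k := hlamk0
  push_neg at hcase
  have hgap : ∀ u ∈ Ek, ‖proj Φᗮ u‖ ≤ δ * ‖u‖ := by
    intro u hu
    have hprojEk : proj Ek u = u := by
      rw [proj_apply]
      exact starProjection_eq_self_iff.mpr hu
    have h := ((proj Φᗮ) ∘L (proj Ek)).le_opNorm u
    rw [ContinuousLinearMap.comp_apply, hprojEk] at h
    rw [hδeq]
    exact h
  have hδ0 : 0 ≤ δ := by rw [hδeq]; exact norm_nonneg _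
  have hpyth : ∀ u : H, ‖u‖^2 = ‖proj Φ u‖^2 + ‖proj Φᗮ u‖^2 := by
    intro u
    have hdecomp : proj Φ u + proj Φᗮ u = u := by
      rw [proj_apply, proj_apply]
      exact starProjection_add_starProjection_orthogonal (K := Φ) u
    have hperp : ⟪proj Φ u, proj Φᗮ u⟫ = 0 := by
      have h1 : proj Φ u ∈ Φ := by
        rw [proj_apply]
        exact (orthogonalProjection Φ u).2
      have h2 : proj Φᗮ u ∈ Φᗮ := by
        rw [proj_apply]
        exact (orthogonalProjection Φᗮ u).2
      exact (Submodule.mem_orthogonal Φ _).mp h2 (proj Φ u) h1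
    conv_lhs => rw [← hdecomp]
    rw [norm_add_sq_real, hperp]
    ring
  have hlow : ∀ u ∈ Ek, (1 - δ^2) * ‖u‖^2 ≤ ‖proj Φ u‖^2 := by
    intro u hu
    have h1 := hgap u hu
    have h2 := hpyth u
    nlinarith [norm_nonneg (proj Φᗮ u), norm_nonneg u]
  -- the injective restriction of proj Φ to Ek
  set g : Ek →ₗ[ℝ] H := ((proj Φ : H →ₗ[ℝ] H)).comp Ek.subtype with hg
  have hgapp : ∀ u : Ek, g u = proj Φ (u : H) := fun u => rfl
  have hginj : Function.Injective g := by
    rw [← LinearMap.ker_eq_bot, Submodule.eq_bot_iff]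
    intro u hu
    rw [LinearMap.mem_ker] at hu
    have h0 : proj Φ (u : H) = 0 := hu
    have h1 := hlow (u : H) u.2
    rw [h0] at h1
    simp only [norm_zero] at h1
    have h2 : ‖(u : H)‖^2 = 0 := le_antisymm (by nlinarith) (sq_nonneg _)
    have h3 : ‖(u : H)‖ = 0 := by
      exact pow_eq_zero_iff (n := 2) (a := ‖(u : H)‖) (by norm_num) |>.mp h2
    exact Subtype.ext (norm_eq_zero.mp h3)
  have hfrEk : Module.finrank ℝ Ek = k := finrank_span_Icc hηOk
  haveI : FiniteDimensional ℝ (LinearMap.range g) := inferInstance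
  have hVrank : Module.finrank ℝ (LinearMap.range g) = k := by
    rw [LinearMap.finrank_range_of_inj hginj, hfrEk]
  obtain ⟨v₀, hv₀mem, hv₀0, hv₀perp⟩ :=
    exists_perp (LinearMap.range g) (le_of_eq hVrank.symm) hk1 γ
  obtain ⟨u₀, hu₀⟩ := hv₀mem
  have hu₀0 : (u₀ : H) ≠ 0 := by
    intro hc
    apply hv₀0
    rw [← hu₀, hgapp, hc]
    simp
  set t : ℝ := ‖(u₀ : H)‖⁻¹ with ht
  have ht0 : t ≠ 0 := inv_ne_zero (norm_ne_zero_iff.mpr hu₀0)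
  set u : H := t • (u₀ : H) with hu
  have huEk : u ∈ Ek := Submodule.smul_mem _ _ u₀.2
  have hu1 : ‖u‖ = 1 := by
    rw [hu, norm_smul, ht, norm_inv, norm_norm]
    exact inv_mul_cancel₀ (norm_ne_zero_iff.mpr hu₀0)
  set v : H := proj Φ u with hv
  have hvv₀ : v = t • v₀ := by
    rw [hv, hu, ContinuousLinearMap.map_smul, ← hu₀, hgapp]
  have hv0 : v ≠ 0 := by
    rw [hvv₀]
    exact smul_ne_zero ht0 hv₀0
  have hvΦ : v ∈ Φ := by
    rw [hv, proj_apply]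
    exact (orthogonalProjection Φ u).2
  have hvperp : ∀ i ∈ Finset.Icc 1 (k-1), ⟪γ i, v⟫ = 0 := by
    intro i hi
    rw [hvv₀, real_inner_smul_right, hv₀perp i hi, mul_zero]
  have hvn : 1 - δ^2 ≤ ‖v‖^2 := by
    have := hlow u huEk
    rw [hu1] at this
    simpa using this
  -- ‖v‖² ≤ ‖proj Ek v‖
  have hinnerv : ⟪u, v⟫ = ‖v‖^2 := by
    rw [real_inner_comm, hprojsub v hvΦ u, ← hv, real_inner_self_eq_norm_sq]
  have hprojEkv : ‖v‖^2 ≤ ‖proj Ek v‖ := by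
    have h1 : ⟪u, v⟫ = ⟪u, proj Ek v⟫ := by
      rw [proj_apply Ek, ← starProjection_apply, ← inner_starProjection_left_eq_right, starProjection_apply]
      congr 1
      rw [← proj_apply Ek]
      rw [proj_apply]
      exact (starProjection_eq_self_iff.mpr huEk).symm
    have h2 : ⟪u, proj Ek v⟫ ≤ ‖u‖ * ‖proj Ek v‖ := real_inner_le_norm u (proj Ek v)
    rw [hu1, one_mul] at h2
    linarith [hinnerv ▸ h1 ▸ h2]
  -- μ k ‖proj Ek v‖² ≤ ⟪v, Tv⟫
  have hmasterlow : μ k * ‖proj Ek v‖^2 ≤ ⟪v, T v⟫ := by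
    obtain ⟨hm1, hm2, hm3⟩ := master v
    have hEkv : ‖proj Ek v‖^2 = ∑ i ∈ Finset.Icc 1 k, ⟪η i, v⟫^2 := by
      rw [proj_span_apply_s2 hηOk, norm_sq_sum hηOk]
    have hbpos : 0 ≤ ⟪v - proj E v, T (v - proj E v)⟫ := hTpos _
    have hs1 : ∑ i ∈ Finset.Icc 1 k, μ k * ⟪η i, v⟫^2
        ≤ ∑ i ∈ Finset.Icc 1 k, μ i * ⟪η i, v⟫^2 := by
      refine Finset.sum_le_sum ?_
      intro i hi
      rw [Finset.mem_Icc] at hi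
      have : μ k ≤ μ i :=
        hμmono i (Set.mem_Icc.mpr ⟨hi.1, by omega⟩) k (Set.mem_Icc.mpr ⟨hk1, by omega⟩)
          (by omega)
      nlinarith [sq_nonneg (⟪η i, v⟫)]
    have hs2 : ∑ i ∈ Finset.Icc 1 k, μ i * ⟪η i, v⟫^2
        ≤ ∑ i ∈ Finset.Icc 1 r, μ i * ⟪η i, v⟫^2 := by
      refine Finset.sum_le_sum_of_subset_of_nonneg (Finset.Icc_subset_Icc_right hkr) ?_
      intro i hi _
      have := hμpos i hi
      nlinarith [sq_nonneg (⟪η i, v⟫)]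
    rw [hm1, hEkv, Finset.mul_sum]
    linarith
  -- ⟪v,Tv⟫ ≤ lam k ‖v‖²
  have hphibound : ⟪v, T v⟫ ≤ lam k * ‖v‖^2 := by
    obtain ⟨hTv, hnv⟩ := phiSide v hvΦ
    rw [hTv, hnv, Finset.mul_sum]
    refine Finset.sum_le_sum ?_
    intro i hi
    rw [Finset.mem_Icc] at hi
    by_cases hik : i < k
    · rw [hvperp i (Finset.mem_Icc.mpr ⟨hi.1, by omega⟩)]
      simp
    · have : lam i ≤ lam k :=
        hlam k (Set.mem_Icc.mpr ⟨hk1, hkn⟩) i (Set.mem_Icc.mpr hi) (by omega)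
      nlinarith [sq_nonneg (⟪γ i, v⟫)]
  have hv2pos : 0 < ‖v‖^2 := pow_pos (norm_pos_iff.mpr hv0) 2
  have hkey : μ k * (‖v‖^2)^2 ≤ lam k * ‖v‖^2 := by
    have h1 : (‖v‖^2)^2 ≤ ‖proj Ek v‖^2 := by
      nlinarith [norm_nonneg (proj Ek v)]
    nlinarith
  have step1 : μ k * ‖v‖^2 ≤ lam k := by
    have h := hkey
    have h2 : (μ k * ‖v‖^2) * ‖v‖^2 ≤ lam k * ‖v‖^2 := by nlinarith
    exact le_of_mul_le_mul_right h2 hv2pos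
  calc (1 - δ^2) * μ k ≤ ‖v‖^2 * μ k :=
        mul_le_mul_of_nonneg_right hvn (le_of_lt hμk)
    _ = μ k * ‖v‖^2 := mul_comm _ _
    _ ≤ lam k := step1

end
end

section
/- Under the stated operator setting, fix 1 ≤ k ≤ r. For every ε > 0 there exists δ > 0 such that for every finite-dimensional subspace Φ of H of dimension n ≥ k with d_F(span{η₁, …, η_k}, Φ) < δ, the Ritz values λ₁ ≥ ⋯ ≥ λ_n of T on Φ satisfy |λ_i − μ_i| < ε for all 1 ≤ i ≤ k. -/
open scoped RealInnerProductSpace ENNReal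
open Submodule Filter

noncomputable section

variable {H : Type*} [NormedAddCommGroup H] [InnerProductSpace ℝ H] [CompleteSpace H]

/-- A Ritz decomposition of (the compression to `Φ` of) `T`: an orthonormal basis
`γ₁, …, γ_n` of the `n`-dimensional subspace `Φ` with `P_Φ T γ_i = λ_i γ_i` and
`λ₁ ≥ λ₂ ≥ ⋯ ≥ λ_n` (so the `λ_i` are the Ritz values of `T` on `Φ`, in decreasing
order with multiplicity). -/
def RitzData {H : Type*} [NormedAddCommGroup H] [InnerProductSpace ℝ H] [CompleteSpace H]
    (Φ : Submodule ℝ H) (T : H →L[ℝ] H) (n : ℕ) (lam : ℕ → ℝ) (γ : ℕ → H) : Prop :=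
  (∀ i ∈ Set.Icc 1 n, ∀ j ∈ Set.Icc 1 n, ⟪γ i, γ j⟫ = if i = j then (1 : ℝ) else 0) ∧
  span ℝ (γ '' Set.Icc 1 n) = Φ ∧
  (∀ i ∈ Set.Icc 1 n, proj Φ (T (γ i)) = lam i • γ i) ∧
  (∀ i ∈ Set.Icc 1 n, ∀ j ∈ Set.Icc 1 n, i ≤ j → lam j ≤ lam i)

lemma proj_eq_self (U : Submodule ℝ H) [HasOrthogonalProjection U] {x : H} (hx : x ∈ U) :
    proj U x = x := by
  rw [proj_apply]
  exact starProjection_eq_self_iff.2 hx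

lemma proj_add_proj_orthogonal (U : Submodule ℝ H) [HasOrthogonalProjection U] (x : H) :
    proj U x + proj Uᗮ x = x := by
  rw [proj_apply, proj_apply]
  exact starProjection_add_starProjection_orthogonal (K := U) x

lemma inner_proj_left (U : Submodule ℝ H) [HasOrthogonalProjection U] {u : H} (hu : u ∈ U)
    (x : H) : ⟪u, proj U x⟫ = ⟪u, x⟫ := by
  have h := proj_add_proj_orthogonal U x
  have h2 : ⟪u, proj Uᗮ x⟫ = 0 :=
    Submodule.inner_right_of_mem_orthogonal hu (proj_mem Uᗮ x)
  calc ⟪u, proj U x⟫ = ⟪u, proj U x⟫ + ⟪u, proj Uᗮ x⟫ := by rw [h2, add_zero]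
    _ = ⟪u, proj U x + proj Uᗮ x⟫ := (inner_add_right _ _ _).symm
    _ = ⟪u, x⟫ := by rw [h]

lemma mem_orthogonal_span_of {s : Set H} {x : H} (h : ∀ y ∈ s, ⟪x, y⟫ = 0) :
    x ∈ (span ℝ s)ᗮ := by
  have ho : span ℝ ({x} : Set H) ⟂ span ℝ s := by
    rw [Submodule.isOrtho_span]
    rintro u (rfl : u = x) v hv
    exact h v hv
  exact ho (Submodule.mem_span_singleton_self x)

lemma inner_sum_sum_s3 {s t : Finset ℕ} (f g : ℕ → H) :
    ⟪∑ i ∈ s, f i, ∑ j ∈ t, g j⟫ = ∑ i ∈ s, ∑ j ∈ t, ⟪f i, g j⟫ := by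
  rw [sum_inner]
  exact Finset.sum_congr rfl fun i _ => inner_sum ..

/-- Existence of a nonzero solution of `i-1` linear equations in unknowns indexed by `Icc 1 i`. -/
lemma exists_nontrivial_combo (i : ℕ) (hi : 1 ≤ i) (a : ℕ → ℕ → ℝ) :
    ∃ c : ℕ → ℝ, (∃ j ∈ Finset.Icc 1 i, c j ≠ 0) ∧ (∀ j, j ∉ Finset.Icc 1 i → c j = 0) ∧
      ∀ l ∈ Finset.Icc 1 (i - 1), ∑ j ∈ Finset.Icc 1 i, c j * a l j = 0 := by
  classical
  set F : (Fin i → ℝ) →ₗ[ℝ] (Fin (i - 1) → ℝ) :=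
    { toFun := fun x l => ∑ j : Fin i, x j * a (l.1 + 1) (j.1 + 1)
      map_add' := by
        intro x y; funext l; simp [add_mul, Finset.sum_add_distrib]
      map_smul' := by
        intro m x; funext l; simp [Finset.mul_sum, mul_assoc] }
  have hlt : Module.finrank ℝ (Fin (i-1) → ℝ) < Module.finrank ℝ (Fin i → ℝ) := by
    simp only [Module.finrank_pi, Fintype.card_fin]
    omega
  have hker : LinearMap.ker F ≠ ⊥ := LinearMap.ker_ne_bot_of_finrank_lt hlt
  obtain ⟨x, hxker, hx0⟩ := (Submodule.ne_bot_iff _).1 hker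
  set c : ℕ → ℝ := fun j => if h : j ∈ Finset.Icc 1 i then x ⟨j - 1, by
    simp only [Finset.mem_Icc] at h; omega⟩ else 0
  have hic : ∀ j (hj : j ∈ Finset.Icc 1 i), c j = x ⟨j - 1, by
      simp only [Finset.mem_Icc] at hj; omega⟩ := by
    intro j hj; simp only [c, dif_pos hj]
  have hsum : ∀ (b : ℕ → ℝ),
      ∑ j ∈ Finset.Icc 1 i, c j * b j = ∑ j : Fin i, x j * b (j.1 + 1) := by
    intro b
    refine Finset.sum_bij' (fun j hj => (⟨j - 1, by
        simp only [Finset.mem_Icc] at hj; omega⟩ : Fin i))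
      (fun j _ => j.1 + 1) (fun a ha => Finset.mem_univ _)
      (fun a _ => by simp only [Finset.mem_Icc]; omega) ?_ ?_ ?_
    · intro a ha
      simp only [Finset.mem_Icc] at ha
      show a - 1 + 1 = a
      omega
    · intro a _
      simp
    · intro a ha
      simp only [Finset.mem_Icc] at ha
      rw [hic a (by simp only [Finset.mem_Icc]; omega)]
      show _ = _ * b (a - 1 + 1)
      rw [Nat.sub_add_cancel ha.1]
  refine ⟨c, ?_, fun j hj => by simp only [c, dif_neg hj], ?_⟩
  · have : ∃ l : Fin i, x l ≠ 0 := by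
      by_contra hcon
      push_neg at hcon
      exact hx0 (funext fun l => hcon l)
    obtain ⟨l, hl⟩ := this
    refine ⟨l.1 + 1, by simp only [Finset.mem_Icc]; omega, ?_⟩
    rw [hic (l.1 + 1) (by simp only [Finset.mem_Icc]; omega)]
    simpa using hl
  · intro l hl
    simp only [Finset.mem_Icc] at hl
    have hF : F x = 0 := hxker
    have := congrFun hF ⟨l - 1, by omega⟩
    simp only [F, LinearMap.coe_mk, AddHom.coe_mk, Pi.zero_apply] at this
    rw [hsum (a l)]
    have hll : l - 1 + 1 = l := by omega
    rw [hll] at this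
    exact this

lemma norm_proj_orth_le_dF (k : ℕ) (η : ℕ → H)
    (hη : ∀ i ∈ Set.Icc 1 k, ∀ j ∈ Set.Icc 1 k, ⟪η i, η j⟫ = if i = j then (1:ℝ) else 0)
    (Φ : Submodule ℝ H) [FiniteDimensional ℝ Φ] {j : ℕ} (hj : j ∈ Set.Icc 1 k) :
    ‖proj Φᗮ (η j)‖ ≤ dF (span ℝ (η '' Set.Icc 1 k)) Φ := by
  classical
  set U : Submodule ℝ H := span ℝ (η '' Set.Icc 1 k) with hUdef
  haveI : FiniteDimensional ℝ U := FiniteDimensional.span_of_finite ℝ ((Set.finite_Icc 1 k).image η)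
  have hηU : ∀ l ∈ Finset.Icc 1 k, η l ∈ U := by
    intro l hl
    exact subset_span ⟨l, by simpa using hl, rfl⟩
  -- formula for proj U
  have hU : ∀ x : H, proj U x = ∑ l ∈ Finset.Icc 1 k, ⟪η l, x⟫ • η l := by
    intro x
    rw [proj_apply]
    refine eq_starProjection_of_mem_orthogonal
      (sum_mem fun l hl => smul_mem _ _ (hηU l hl)) ?_
    refine mem_orthogonal_span_of ?_
    rintro y ⟨m, hm, rfl⟩
    rw [inner_sub_left, sum_inner]
    have hms : m ∈ Finset.Icc 1 k := by simpa using hm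
    have : ∀ l ∈ Finset.Icc 1 k, ⟪⟪η l, x⟫ • η l, η m⟫ = if l = m then ⟪η m, x⟫ else 0 := by
      intro l hl
      rw [real_inner_smul_left, hη l (by simpa using hl) m hm]
      by_cases h : l = m <;> simp [h]
    rw [Finset.sum_congr rfl this, Finset.sum_ite_eq' _ m _, if_pos hms,
      real_inner_comm (η m) x, sub_self]
  set A : H →L[ℝ] H := (proj Φᗮ) ∘L (proj U) with hAdef
  set v : ℕ → H := fun l => proj Φᗮ (η l) with hvdef
  have hA : ∀ x : H, A x = ∑ l ∈ Finset.Icc 1 k, ⟪η l, x⟫ • v l := by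
    intro x
    show proj Φᗮ (proj U x) = _
    rw [hU x, map_sum]
    exact Finset.sum_congr rfl fun l _ => (proj Φᗮ).map_smul _ _
  -- the Hilbert basis
  set e := (exists_hilbertBasis ℝ H).choose_spec.choose with hedef
  have hAe : ∀ x : H, ‖A x‖ ^ 2 =
      ∑ l ∈ Finset.Icc 1 k, ∑ m ∈ Finset.Icc 1 k, (⟪η l, x⟫ * ⟪x, η m⟫) * ⟪v l, v m⟫ := by
    intro x
    rw [← real_inner_self_eq_norm_sq, hA x, inner_sum_sum_s3]
    refine Finset.sum_congr rfl fun l _ => Finset.sum_congr rfl fun m _ => ?_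
    rw [real_inner_smul_left, real_inner_smul_right, real_inner_comm x (η m)]
    ring
  set S : ℝ := ∑ l ∈ Finset.Icc 1 k, ‖v l‖ ^ 2 with hSdef
  have hHasSum : HasSum (fun i => ‖A (e i)‖ ^ 2) S := by
    have h1 : ∀ l ∈ Finset.Icc 1 k, ∀ m ∈ Finset.Icc 1 k,
        HasSum (fun i => (⟪η l, e i⟫ * ⟪e i, η m⟫) * ⟪v l, v m⟫)
          ((if l = m then (1:ℝ) else 0) * ⟪v l, v m⟫) := by
      intro l hl m hm
      have := (e.hasSum_inner_mul_inner (η l) (η m)).mul_right ⟪v l, v m⟫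
      rwa [hη l (by simpa using hl) m (by simpa using hm)] at this
    have h2 : HasSum (fun i => ∑ l ∈ Finset.Icc 1 k, ∑ m ∈ Finset.Icc 1 k,
        (⟪η l, e i⟫ * ⟪e i, η m⟫) * ⟪v l, v m⟫)
        (∑ l ∈ Finset.Icc 1 k, ∑ m ∈ Finset.Icc 1 k,
          (if l = m then (1:ℝ) else 0) * ⟪v l, v m⟫) :=
      hasSum_sum fun l hl => hasSum_sum fun m hm => h1 l hl m hm
    have h3 : (∑ l ∈ Finset.Icc 1 k, ∑ m ∈ Finset.Icc 1 k,
        (if l = m then (1:ℝ) else 0) * ⟪v l, v m⟫) = S := by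
      refine Finset.sum_congr rfl fun l hl => ?_
      have : ∀ m ∈ Finset.Icc 1 k, (if l = m then (1:ℝ) else 0) * ⟪v l, v m⟫
          = if m = l then ⟪v l, v m⟫ else 0 := by
        intro m hm
        by_cases h : l = m
        · simp [h]
        · simp [h, Ne.symm h, fun hh : m = l => h hh.symm]
      rw [Finset.sum_congr rfl this, Finset.sum_ite_eq' _ l _, if_pos hl,
        real_inner_self_eq_norm_sq]
    rw [h3] at h2
    refine h2.congr_fun fun i => ?_
    rw [hAe (e i)]
  have hSnn : 0 ≤ S := Finset.sum_nonneg fun l _ => sq_nonneg _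
  have hdF : dF U Φ = Real.sqrt S := by
    have hhs : hsNormSq A = ENNReal.ofReal S := by
      have : hsNormSq A = ∑' i, ENNReal.ofReal (‖A (e i)‖ ^ 2) := by
        refine tsum_congr fun i => ?_
        rw [ENNReal.ofReal_pow (norm_nonneg _), ofReal_norm, enorm_eq_nnnorm]
      rw [this, ← ENNReal.ofReal_tsum_of_nonneg (fun i => sq_nonneg _) hHasSum.summable,
        hHasSum.tsum_eq]
    show hsNorm A = _
    rw [hsNorm, hhs, ENNReal.toReal_ofReal hSnn]
  rw [hdF]
  have h1 : ‖v j‖ ^ 2 ≤ S := by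
    refine Finset.single_le_sum (fun l _ => sq_nonneg (‖v l‖)) (by simpa using hj)
  calc ‖proj Φᗮ (η j)‖ = Real.sqrt (‖v j‖ ^ 2) := by
        rw [Real.sqrt_sq (norm_nonneg _)]
    _ ≤ Real.sqrt S := Real.sqrt_le_sqrt h1

/-- Inner product of two combinations against a "diagonal" family. -/
lemma inner_combo_diag (s : Finset ℕ) (v w : ℕ → H) (t : ℕ → ℝ)
    (hv : ∀ i ∈ s, ∀ j ∈ s, ⟪v i, w j⟫ = if i = j then t i else 0) (c d : ℕ → ℝ) :
    ⟪∑ i ∈ s, c i • v i, ∑ j ∈ s, d j • w j⟫ = ∑ i ∈ s, c i * d i * t i := by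
  rw [inner_sum_sum_s3]
  refine Finset.sum_congr rfl fun i hi => ?_
  have : ∀ j ∈ s, ⟪c i • v i, d j • w j⟫ = if j = i then c i * d i * t i else 0 := by
    intro j hj
    rw [real_inner_smul_left, real_inner_smul_right, hv i hi j hj]
    by_cases h : i = j
    · subst h; simp [mul_comm, mul_assoc, mul_left_comm]
    · rw [if_neg h, if_neg (fun hh : j = i => h hh.symm)]
      ring
  rw [Finset.sum_congr rfl this, Finset.sum_ite_eq' _ i _, if_pos hi]

/-- Expansion of an element of the span of an orthonormal family. -/
lemma span_expansion {n : ℕ} {γ : ℕ → H}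
    (hγ : ∀ i ∈ Set.Icc 1 n, ∀ j ∈ Set.Icc 1 n, ⟪γ i, γ j⟫ = if i = j then (1:ℝ) else 0)
    {v : H} (hv : v ∈ span ℝ (γ '' Set.Icc 1 n)) :
    v = ∑ l ∈ Finset.Icc 1 n, ⟪γ l, v⟫ • γ l := by
  set Q : H := v - ∑ l ∈ Finset.Icc 1 n, ⟪γ l, v⟫ • γ l with hQdef
  have hQorth : Q ∈ (span ℝ (γ '' Set.Icc 1 n))ᗮ := by
    refine mem_orthogonal_span_of ?_
    rintro y ⟨m, hm, rfl⟩
    have hms : m ∈ Finset.Icc 1 n := by simpa using hm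
    rw [hQdef, inner_sub_left, sum_inner]
    have : ∀ l ∈ Finset.Icc 1 n, ⟪⟪γ l, v⟫ • γ l, γ m⟫ = if l = m then ⟪γ m, v⟫ else 0 := by
      intro l hl
      rw [real_inner_smul_left, hγ l (by simpa using hl) m hm]
      by_cases h : l = m
      · simp [h]
      · simp [h]
    rw [Finset.sum_congr rfl this, Finset.sum_ite_eq' _ m _, if_pos hms,
      real_inner_comm v (γ m), sub_self]
  have hQmem : Q ∈ span ℝ (γ '' Set.Icc 1 n) := by
    refine sub_mem hv (sum_mem fun l hl => smul_mem _ _ (subset_span ⟨l, by simpa using hl, rfl⟩))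
  have hQ0 : Q = 0 := by
    have := Submodule.inner_right_of_mem_orthogonal hQmem hQorth
    exact inner_self_eq_zero.1 this
  exact (sub_eq_zero.1 hQ0)

lemma ritz_upper
    (T : H →L[ℝ] H)
    (hTsa : ∀ x y : H, ⟪T x, y⟫ = ⟪x, T y⟫)
    (r : ℕ) (η : ℕ → H) (μ : ℕ → ℝ)
    (hη : ∀ i ∈ Set.Icc 1 r, ∀ j ∈ Set.Icc 1 r, ⟪η i, η j⟫ = if i = j then (1 : ℝ) else 0)
    (hTeig : ∀ i ∈ Set.Icc 1 r, T (η i) = μ i • η i)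
    (hμmono : ∀ i ∈ Set.Icc 1 (r + 1), ∀ j ∈ Set.Icc 1 (r + 1), i ≤ j → μ j ≤ μ i)
    (hTinv : ∀ w ∈ (span ℝ (η '' Set.Icc 1 r))ᗮ, T w ∈ (span ℝ (η '' Set.Icc 1 r))ᗮ)
    (hTres : ∀ w ∈ (span ℝ (η '' Set.Icc 1 r))ᗮ, ⟪w, T w⟫ ≤ μ (r + 1) * ‖w‖ ^ 2)
    (Φ : Submodule ℝ H) (n : ℕ) [FiniteDimensional ℝ Φ]
    (lam : ℕ → ℝ) (γ : ℕ → H) (hR : RitzData Φ T n lam γ)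
    (k : ℕ) (hk1 : 1 ≤ k) (hkr : k ≤ r) (hkn : k ≤ n) :
    ∀ i ∈ Set.Icc 1 k, lam i ≤ μ i := by
  classical
  obtain ⟨hγo, hγspan, hγeig, hlmono⟩ := hR
  intro i hi
  rw [Set.mem_Icc] at hi
  have hin : i ≤ n := le_trans hi.2 hkn
  have hir : i ≤ r := le_trans hi.2 hkr
  have hsub : ∀ j ∈ Finset.Icc 1 i, j ∈ Set.Icc 1 n := by
    intro j hj; simp only [Finset.mem_Icc] at hj; exact Set.mem_Icc.2 ⟨hj.1, le_trans hj.2 hin⟩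
  have hγΦ : ∀ j ∈ Set.Icc 1 n, γ j ∈ Φ := by
    intro j hj; rw [← hγspan]; exact subset_span ⟨j, hj, rfl⟩
  have hTγ : ∀ j ∈ Finset.Icc 1 i, ∀ l ∈ Finset.Icc 1 i,
      ⟪γ j, T (γ l)⟫ = if j = l then lam j else 0 := by
    intro j hj l hl
    have hjn := hsub j hj
    have hln := hsub l hl
    have h1 : ⟪γ j, T (γ l)⟫ = ⟪γ j, proj Φ (T (γ l))⟫ :=
      (inner_proj_left Φ (hγΦ j hjn) (T (γ l))).symm
    rw [h1, hγeig l hln, real_inner_smul_right, hγo j hjn l hln]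
    by_cases h : j = l
    · subst h; simp
    · simp [h]
  have hγd : ∀ j ∈ Finset.Icc 1 i, ∀ l ∈ Finset.Icc 1 i,
      ⟪γ j, γ l⟫ = if j = l then (fun _ => (1:ℝ)) j else 0 := by
    intro j hj l hl; exact hγo j (hsub j hj) l (hsub l hl)
  obtain ⟨c, ⟨j0, hj0, hj0ne⟩, hcsupp, hceq⟩ :=
    exists_nontrivial_combo i hi.1 (fun l j => ⟪η l, γ j⟫)
  set φ : H := ∑ j ∈ Finset.Icc 1 i, c j • γ j with hφdef
  have hφT : ⟪φ, T φ⟫ = ∑ j ∈ Finset.Icc 1 i, c j ^ 2 * lam j := by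
    have hTφ : T φ = ∑ j ∈ Finset.Icc 1 i, c j • (fun l => T (γ l)) j := by
      rw [hφdef, map_sum]
      exact Finset.sum_congr rfl fun j _ => T.map_smul _ _
    rw [hTφ, hφdef, inner_combo_diag _ γ (fun l => T (γ l)) lam hTγ c c]
    exact Finset.sum_congr rfl fun j _ => by ring
  have hφφ : ⟪φ, φ⟫ = ∑ j ∈ Finset.Icc 1 i, c j ^ 2 := by
    rw [hφdef, inner_combo_diag _ γ γ (fun _ => 1) hγd c c]
    exact Finset.sum_congr rfl fun j _ => by ring
  set D : ℝ := ∑ j ∈ Finset.Icc 1 i, c j ^ 2 with hDdef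
  have hD : 0 < D := by
    refine Finset.sum_pos' (fun j _ => sq_nonneg _) ⟨j0, hj0, ?_⟩
    positivity
  have hlow : lam i * D ≤ ⟪φ, T φ⟫ := by
    rw [hφT, hDdef, Finset.mul_sum]
    refine Finset.sum_le_sum fun j hj => ?_
    have hj' := hj
    simp only [Finset.mem_Icc] at hj'
    have : lam i ≤ lam j := hlmono j (hsub j hj) i (Set.mem_Icc.2 ⟨hi.1, hin⟩) hj'.2
    calc lam i * c j ^ 2 = c j ^ 2 * lam i := by ring
      _ ≤ c j ^ 2 * lam j := mul_le_mul_of_nonneg_left this (sq_nonneg _)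
  -- decomposition
  set b : ℕ → ℝ := fun m => ⟪η m, φ⟫ with hbdef
  set u : H := ∑ m ∈ Finset.Icc i r, b m • η m with hudef
  set w : H := φ - u with hwdef
  have hmem_ir : ∀ m ∈ Finset.Icc i r, m ∈ Set.Icc 1 r := by
    intro m hm; simp only [Finset.mem_Icc] at hm
    exact Set.mem_Icc.2 ⟨le_trans hi.1 hm.1, hm.2⟩
  have hφortho : ∀ l ∈ Finset.Icc 1 (i - 1), ⟪η l, φ⟫ = 0 := by
    intro l hl
    rw [hφdef, inner_sum]
    have : ∀ j ∈ Finset.Icc 1 i, ⟪η l, c j • γ j⟫ = c j * ⟪η l, γ j⟫ := by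
      intro j _; rw [real_inner_smul_right]
    rw [Finset.sum_congr rfl this]
    exact hceq l hl
  have hu_mem : u ∈ span ℝ (η '' Set.Icc 1 r) := by
    exact sum_mem fun m hm => smul_mem _ _ (subset_span ⟨m, hmem_ir m hm, rfl⟩)
  have hwmem : w ∈ (span ℝ (η '' Set.Icc 1 r))ᗮ := by
    refine mem_orthogonal_span_of ?_
    rintro y ⟨m, hm, rfl⟩
    rw [hwdef, inner_sub_left]
    have hum : ⟪u, η m⟫ = if m ∈ Finset.Icc i r then b m else 0 := by
      rw [hudef, sum_inner]
      have : ∀ l ∈ Finset.Icc i r, ⟪b l • η l, η m⟫ = if l = m then b m else 0 := by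
        intro l hl
        rw [real_inner_smul_left, hη l (hmem_ir l hl) m hm]
        by_cases h : l = m
        · subst h; simp
        · simp [h]
      rw [Finset.sum_congr rfl this, Finset.sum_ite_eq' _ m _]
    rw [hum]
    by_cases hmi : i ≤ m
    · rw [if_pos (Finset.mem_Icc.2 ⟨hmi, (Set.mem_Icc.1 hm).2⟩)]
      show ⟪φ, η m⟫ - ⟪η m, φ⟫ = 0
      rw [real_inner_comm]
      exact sub_self _
    · rw [if_neg (fun hc => hmi (Finset.mem_Icc.1 hc).1), sub_zero, real_inner_comm]
      exact hφortho m (Finset.mem_Icc.2 ⟨(Set.mem_Icc.1 hm).1, by omega⟩)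
  have hφuw : φ = u + w := by rw [hwdef]; abel
  have h1 : ⟪u, T w⟫ = 0 :=
    Submodule.inner_right_of_mem_orthogonal hu_mem (hTinv w hwmem)
  have h2 : ⟪w, T u⟫ = 0 := by
    rw [← hTsa w u]
    exact Submodule.inner_left_of_mem_orthogonal hu_mem (hTinv w hwmem)
  have hQsplit : ⟪φ, T φ⟫ = ⟪u, T u⟫ + ⟪w, T w⟫ := by
    calc ⟪φ, T φ⟫ = ⟪u + w, T u + T w⟫ := by rw [← hφuw, ← map_add, ← hφuw]
      _ = ⟪u, T u⟫ + ⟪u, T w⟫ + (⟪w, T u⟫ + ⟪w, T w⟫) := by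
          rw [inner_add_left, inner_add_right, inner_add_right]
      _ = ⟪u, T u⟫ + ⟪w, T w⟫ := by rw [h1, h2]; ring
  have huw0 : ⟪u, w⟫ = 0 := Submodule.inner_right_of_mem_orthogonal hu_mem hwmem
  have hwu0 : ⟪w, u⟫ = 0 := Submodule.inner_left_of_mem_orthogonal hu_mem hwmem
  have hnormsplit : ⟪φ, φ⟫ = ⟪u, u⟫ + ⟪w, w⟫ := by
    calc ⟪φ, φ⟫ = ⟪u + w, u + w⟫ := by rw [← hφuw]
      _ = ⟪u, u⟫ + ⟪u, w⟫ + (⟪w, u⟫ + ⟪w, w⟫) := by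
          rw [inner_add_left, inner_add_right, inner_add_right]
      _ = ⟪u, u⟫ + ⟪w, w⟫ := by rw [huw0, hwu0]; ring
  have hTη : ∀ j ∈ Finset.Icc i r, ∀ l ∈ Finset.Icc i r,
      ⟪η j, (fun m => T (η m)) l⟫ = if j = l then μ j else 0 := by
    intro j hj l hl
    simp only
    rw [hTeig l (hmem_ir l hl), real_inner_smul_right, hη j (hmem_ir j hj) l (hmem_ir l hl)]
    by_cases h : j = l
    · subst h; simp
    · simp [h]
  have hηd : ∀ j ∈ Finset.Icc i r, ∀ l ∈ Finset.Icc i r,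
      ⟪η j, η l⟫ = if j = l then (fun _ => (1:ℝ)) j else 0 := by
    intro j hj l hl; exact hη j (hmem_ir j hj) l (hmem_ir l hl)
  have huu : ⟪u, u⟫ = ∑ m ∈ Finset.Icc i r, b m ^ 2 := by
    rw [hudef, inner_combo_diag _ η η (fun _ => 1) hηd b b]
    exact Finset.sum_congr rfl fun m _ => by ring
  have huTu : ⟪u, T u⟫ = ∑ m ∈ Finset.Icc i r, b m ^ 2 * μ m := by
    have hTu : T u = ∑ m ∈ Finset.Icc i r, b m • (fun l => T (η l)) m := by
      rw [hudef, map_sum]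
      exact Finset.sum_congr rfl fun m _ => T.map_smul _ _
    rw [hTu, hudef, inner_combo_diag _ η (fun l => T (η l)) μ hTη b b]
    exact Finset.sum_congr rfl fun m _ => by ring
  have hiR1 : i ∈ Set.Icc 1 (r + 1) := Set.mem_Icc.2 ⟨hi.1, by omega⟩
  have bound1 : ⟪u, T u⟫ ≤ μ i * ⟪u, u⟫ := by
    rw [huTu, huu, Finset.mul_sum]
    refine Finset.sum_le_sum fun m hm => ?_
    have hm' := Finset.mem_Icc.1 hm
    have : μ m ≤ μ i := hμmono i hiR1 m (Set.mem_Icc.2 ⟨le_trans hi.1 hm'.1, by omega⟩) hm'.1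
    calc b m ^ 2 * μ m ≤ b m ^ 2 * μ i := mul_le_mul_of_nonneg_left this (sq_nonneg _)
      _ = μ i * b m ^ 2 := by ring
  have bound2 : ⟪w, T w⟫ ≤ μ i * ⟪w, w⟫ := by
    have h3 := hTres w hwmem
    have h4 : μ (r + 1) ≤ μ i := hμmono i hiR1 (r + 1) (Set.mem_Icc.2 ⟨by omega, le_refl _⟩)
      (by omega)
    calc ⟪w, T w⟫ ≤ μ (r + 1) * ‖w‖ ^ 2 := h3
      _ ≤ μ i * ‖w‖ ^ 2 := mul_le_mul_of_nonneg_right h4 (sq_nonneg _)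
      _ = μ i * ⟪w, w⟫ := by rw [real_inner_self_eq_norm_sq]
  have hfinal : lam i * D ≤ μ i * D := by
    calc lam i * D ≤ ⟪φ, T φ⟫ := hlow
      _ = ⟪u, T u⟫ + ⟪w, T w⟫ := hQsplit
      _ ≤ μ i * ⟪u, u⟫ + μ i * ⟪w, w⟫ := add_le_add bound1 bound2
      _ = μ i * ⟪φ, φ⟫ := by rw [hnormsplit]; ring
      _ = μ i * D := by rw [hφφ]
  exact le_of_mul_le_mul_right hfinal hD

set_option maxHeartbeats 1000000 in
/-- Convergence of the top `k` Ritz values: for every `ε > 0` there is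
`δ > 0` such that whenever `d_F(span{η₁..η_k}, Φ) < δ`, the Ritz values satisfy
`|λ_i − μ_i| < ε` for `1 ≤ i ≤ k`. -/
theorem stmt3 {H : Type*} [NormedAddCommGroup H] [InnerProductSpace ℝ H] [CompleteSpace H]
    (T : H →L[ℝ] H)
    (hTsa : ∀ x y : H, ⟪T x, y⟫ = ⟪x, T y⟫)
    (hTpos : ∀ u : H, 0 ≤ ⟪u, T u⟫)
    (r : ℕ) (hr : 1 ≤ r) (η : ℕ → H) (μ : ℕ → ℝ)
    (hη : ∀ i ∈ Set.Icc 1 r, ∀ j ∈ Set.Icc 1 r, ⟪η i, η j⟫ = if i = j then (1 : ℝ) else 0)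
    (hTeig : ∀ i ∈ Set.Icc 1 r, T (η i) = μ i • η i)
    (hμmono : ∀ i ∈ Set.Icc 1 (r + 1), ∀ j ∈ Set.Icc 1 (r + 1), i ≤ j → μ j ≤ μ i)
    (hμr : 0 < μ r) (hμr1 : 0 ≤ μ (r + 1))
    (hTinv : ∀ w ∈ (span ℝ (η '' Set.Icc 1 r))ᗮ, T w ∈ (span ℝ (η '' Set.Icc 1 r))ᗮ)
    (hTres : ∀ w ∈ (span ℝ (η '' Set.Icc 1 r))ᗮ, ⟪w, T w⟫ ≤ μ (r + 1) * ‖w‖ ^ 2)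
    (k : ℕ) (hk1 : 1 ≤ k) (hkr : k ≤ r) :
    ∀ ε > 0, ∃ δ > 0, ∀ (Φ : Submodule ℝ H) (n : ℕ),
      FiniteDimensional ℝ Φ → Module.finrank ℝ Φ = n → k ≤ n →
      dF (span ℝ (η '' Set.Icc 1 k)) Φ < δ →
      ∀ (lam : ℕ → ℝ) (γ : ℕ → H), RitzData Φ T n lam γ →
        ∀ i ∈ Set.Icc 1 k, |lam i - μ i| < ε := by
  classical
  intro ε hε
  set C : ℝ := 2 * ‖T‖ * (k : ℝ) + 3 * μ 1 * (k : ℝ) ^ 2 + 1 with hCdef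
  have h1r : μ r ≤ μ 1 := hμmono 1 (Set.mem_Icc.2 ⟨le_refl 1, by omega⟩)
    r (Set.mem_Icc.2 ⟨hr, by omega⟩) hr
  have hμ1 : 0 ≤ μ 1 := by linarith
  have hk1R : (1 : ℝ) ≤ (k : ℝ) := by exact_mod_cast hk1
  have hT0 : (0:ℝ) ≤ ‖T‖ := norm_nonneg _
  have hC : 0 < C := by positivity
  refine ⟨min 1 (ε / C), lt_min one_pos (div_pos hε hC), ?_⟩
  set δm : ℝ := min 1 (ε / C) with hδmdef
  intro Φ n hfin hrank hkn hdFlt lam γ hR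
  haveI := hfin
  have hupper : ∀ i ∈ Set.Icc 1 k, lam i ≤ μ i :=
    ritz_upper T hTsa r η μ hη hTeig hμmono hTinv hTres Φ n lam γ hR k hk1 hkr hkn
  obtain ⟨hγo, hγspan, hγeig, hlmono⟩ := hR
  intro i hi
  have hi' := Set.mem_Icc.1 hi
  have hin : i ≤ n := le_trans hi'.2 hkn
  have hir : i ≤ r := le_trans hi'.2 hkr
  have hδm0 : 0 < δm := lt_min one_pos (div_pos hε hC)
  have hδm1 : δm ≤ 1 := min_le_left _ _
  have hδmC : δm * C ≤ ε := by
    have h := min_le_right 1 (ε / C)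
    calc δm * C ≤ (ε / C) * C := mul_le_mul_of_nonneg_right h (le_of_lt hC)
      _ = ε := div_mul_cancel₀ ε (ne_of_gt hC)
  have hγΦ : ∀ j ∈ Set.Icc 1 n, γ j ∈ Φ := by
    intro j hj; rw [← hγspan]; exact subset_span ⟨j, hj, rfl⟩
  -- diagonal facts for γ on the full range
  have hTγn : ∀ j ∈ Finset.Icc 1 n, ∀ l ∈ Finset.Icc 1 n,
      ⟪γ j, (fun m => T (γ m)) l⟫ = if j = l then lam j else 0 := by
    intro j hj l hl
    have hjn : j ∈ Set.Icc 1 n := by simpa [Set.mem_Icc] using Finset.mem_Icc.1 hj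
    have hln : l ∈ Set.Icc 1 n := by simpa [Set.mem_Icc] using Finset.mem_Icc.1 hl
    simp only
    have h1 : ⟪γ j, T (γ l)⟫ = ⟪γ j, proj Φ (T (γ l))⟫ :=
      (inner_proj_left Φ (hγΦ j hjn) (T (γ l))).symm
    rw [h1, hγeig l hln, real_inner_smul_right, hγo j hjn l hln]
    by_cases h : j = l
    · subst h; simp
    · simp [h]
  have hγdn : ∀ j ∈ Finset.Icc 1 n, ∀ l ∈ Finset.Icc 1 n,
      ⟪γ j, γ l⟫ = if j = l then (fun _ => (1:ℝ)) j else 0 := by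
    intro j hj l hl
    exact hγo j (by simpa [Set.mem_Icc] using Finset.mem_Icc.1 hj)
      l (by simpa [Set.mem_Icc] using Finset.mem_Icc.1 hl)
  have hlam0 : 0 ≤ lam i := by
    have h := hTγn i (Finset.mem_Icc.2 ⟨hi'.1, hin⟩) i (Finset.mem_Icc.2 ⟨hi'.1, hin⟩)
    simp only [if_pos rfl] at h
    have := hTpos (γ i)
    rw [h] at this
    exact this
  -- smallness of the projections
  have hsmall : ∀ j ∈ Set.Icc 1 k, ‖proj Φ (η j) - η j‖ < δm := by
    intro j hj
    have hηk : ∀ a ∈ Set.Icc 1 k, ∀ b ∈ Set.Icc 1 k, ⟪η a, η b⟫ = if a = b then (1:ℝ) else 0 := by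
      intro a ha b hb
      have ha' := Set.mem_Icc.1 ha
      have hb' := Set.mem_Icc.1 hb
      exact hη a (Set.mem_Icc.2 ⟨ha'.1, le_trans ha'.2 hkr⟩)
        b (Set.mem_Icc.2 ⟨hb'.1, le_trans hb'.2 hkr⟩)
    have h1 := norm_proj_orth_le_dF k η hηk Φ hj
    have h4 : proj Φᗮ (η j) = η j - proj Φ (η j) :=
      eq_sub_of_add_eq' (proj_add_proj_orthogonal Φ (η j))
    rw [← norm_neg, neg_sub, ← h4]
    exact lt_of_le_of_lt h1 hdFlt
  -- the test vector
  obtain ⟨d, ⟨j0, hj0, hj0ne⟩, hdsupp, hdeq⟩ :=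
    exists_nontrivial_combo i hi'.1 (fun l j => ⟪γ l, proj Φ (η j)⟫)
  set v : H := ∑ j ∈ Finset.Icc 1 i, d j • proj Φ (η j) with hvdef
  set u : H := ∑ j ∈ Finset.Icc 1 i, d j • η j with hudef
  set D : ℝ := ∑ j ∈ Finset.Icc 1 i, d j ^ 2 with hDdef
  have hD : 0 < D := by
    refine Finset.sum_pos' (fun j _ => sq_nonneg _) ⟨j0, hj0, ?_⟩
    positivity
  set SD : ℝ := Real.sqrt D with hSDdef
  have hSD0 : 0 ≤ SD := Real.sqrt_nonneg _
  have hSD2 : SD ^ 2 = D := Real.sq_sqrt hD.le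
  have hsubr : ∀ j ∈ Finset.Icc 1 i, j ∈ Set.Icc 1 r := by
    intro j hj; have := Finset.mem_Icc.1 hj
    exact Set.mem_Icc.2 ⟨this.1, le_trans this.2 hir⟩
  have hsubk : ∀ j ∈ Finset.Icc 1 i, j ∈ Set.Icc 1 k := by
    intro j hj; have := Finset.mem_Icc.1 hj
    exact Set.mem_Icc.2 ⟨this.1, le_trans this.2 hi'.2⟩
  have hvmem : v ∈ Φ := sum_mem fun j _ => smul_mem _ _ (proj_mem Φ _)
  -- bound on v - u
  have hvu : ‖v - u‖ ≤ (k : ℝ) * SD * δm := by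
    have hsplit : v - u = ∑ j ∈ Finset.Icc 1 i, d j • (proj Φ (η j) - η j) := by
      rw [hvdef, hudef, ← Finset.sum_sub_distrib]
      exact Finset.sum_congr rfl fun j _ => (smul_sub _ _ _).symm
    rw [hsplit]
    have habs : ∀ j ∈ Finset.Icc 1 i, |d j| ≤ SD := by
      intro j hj
      rw [← Real.sqrt_sq_eq_abs]
      exact Real.sqrt_le_sqrt (Finset.single_le_sum (fun l _ => sq_nonneg (d l)) hj)
    calc ‖∑ j ∈ Finset.Icc 1 i, d j • (proj Φ (η j) - η j)‖
        ≤ ∑ j ∈ Finset.Icc 1 i, ‖d j • (proj Φ (η j) - η j)‖ := norm_sum_le _ _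
      _ ≤ ∑ _j ∈ Finset.Icc 1 i, SD * δm := by
          refine Finset.sum_le_sum fun j hj => ?_
          rw [norm_smul, Real.norm_eq_abs]
          exact mul_le_mul (habs j hj) (le_of_lt (hsmall j (hsubk j hj)))
            (norm_nonneg _) hSD0
      _ = (i : ℝ) * (SD * δm) := by
          rw [Finset.sum_const, Nat.card_Icc, nsmul_eq_mul]
          norm_num
      _ ≤ (k : ℝ) * (SD * δm) := by
          refine mul_le_mul_of_nonneg_right ?_ (by positivity)
          exact_mod_cast hi'.2
      _ = (k : ℝ) * SD * δm := by ring
  -- diagonal facts for η on Icc 1 i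
  have hTηi : ∀ j ∈ Finset.Icc 1 i, ∀ l ∈ Finset.Icc 1 i,
      ⟪η j, (fun m => T (η m)) l⟫ = if j = l then μ j else 0 := by
    intro j hj l hl
    simp only
    rw [hTeig l (hsubr l hl), real_inner_smul_right, hη j (hsubr j hj) l (hsubr l hl)]
    by_cases h : j = l
    · subst h; simp
    · simp [h]
  have hηdi : ∀ j ∈ Finset.Icc 1 i, ∀ l ∈ Finset.Icc 1 i,
      ⟪η j, η l⟫ = if j = l then (fun _ => (1:ℝ)) j else 0 := by
    intro j hj l hl; exact hη j (hsubr j hj) l (hsubr l hl)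
  have huu : ⟪u, u⟫ = D := by
    rw [hudef, inner_combo_diag _ η η (fun _ => 1) hηdi d d, hDdef]
    exact Finset.sum_congr rfl fun j _ => by ring
  have hnu : ‖u‖ = SD := by
    rw [hSDdef, ← huu, real_inner_self_eq_norm_sq, Real.sqrt_sq (norm_nonneg _)]
  have huTu : μ i * D ≤ ⟪u, T u⟫ := by
    have hTu : T u = ∑ j ∈ Finset.Icc 1 i, d j • (fun m => T (η m)) j := by
      rw [hudef, map_sum]
      exact Finset.sum_congr rfl fun j _ => T.map_smul _ _
    rw [hTu, hudef, inner_combo_diag _ η (fun m => T (η m)) μ hTηi d d, hDdef, Finset.mul_sum]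
    refine Finset.sum_le_sum fun j hj => ?_
    have hj' := Finset.mem_Icc.1 hj
    have hji : μ i ≤ μ j := hμmono j (Set.mem_Icc.2 ⟨hj'.1, by omega⟩)
      i (Set.mem_Icc.2 ⟨hi'.1, by omega⟩) hj'.2
    calc μ i * d j ^ 2 ≤ μ j * d j ^ 2 := mul_le_mul_of_nonneg_right hji (sq_nonneg _)
      _ = d j * d j * μ j := by ring
  -- expansion of v in the γ basis
  have haz : ∀ l ∈ Finset.Icc 1 (i - 1), ⟪γ l, v⟫ = 0 := by
    intro l hl
    rw [hvdef, inner_sum]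
    have : ∀ j ∈ Finset.Icc 1 i, ⟪γ l, d j • proj Φ (η j)⟫ = d j * ⟪γ l, proj Φ (η j)⟫ := by
      intro j _; rw [real_inner_smul_right]
    rw [Finset.sum_congr rfl this]
    exact hdeq l hl
  have hvexp : v = ∑ l ∈ Finset.Icc 1 n, ⟪γ l, v⟫ • γ l :=
    span_expansion hγo (by rw [hγspan]; exact hvmem)
  have hvv : ⟪v, v⟫ = ∑ l ∈ Finset.Icc 1 n, ⟪γ l, v⟫ ^ 2 := by
    conv_lhs => rw [hvexp]
    rw [inner_combo_diag _ γ γ (fun _ => 1) hγdn _ _]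
    exact Finset.sum_congr rfl fun l _ => by ring
  have hvTv : ⟪v, T v⟫ = ∑ l ∈ Finset.Icc 1 n, ⟪γ l, v⟫ ^ 2 * lam l := by
    conv_lhs => rw [hvexp]
    have hTv : T (∑ l ∈ Finset.Icc 1 n, ⟪γ l, v⟫ • γ l)
        = ∑ l ∈ Finset.Icc 1 n, ⟪γ l, v⟫ • (fun m => T (γ m)) l := by
      rw [map_sum]
      exact Finset.sum_congr rfl fun l _ => T.map_smul _ _
    rw [hTv, inner_combo_diag _ γ (fun m => T (γ m)) lam hTγn _ _]
    exact Finset.sum_congr rfl fun l _ => by ring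
  have hvTv_le : ⟪v, T v⟫ ≤ lam i * ‖v‖ ^ 2 := by
    rw [hvTv, ← real_inner_self_eq_norm_sq, hvv, Finset.mul_sum]
    refine Finset.sum_le_sum fun l hl => ?_
    have hl' := Finset.mem_Icc.1 hl
    by_cases hli : i ≤ l
    · have : lam l ≤ lam i := hlmono i (Set.mem_Icc.2 ⟨hi'.1, hin⟩)
        l (Set.mem_Icc.2 ⟨hl'.1, hl'.2⟩) hli
      calc ⟪γ l, v⟫ ^ 2 * lam l ≤ ⟪γ l, v⟫ ^ 2 * lam i :=
            mul_le_mul_of_nonneg_left this (sq_nonneg _)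
        _ = lam i * ⟪γ l, v⟫ ^ 2 := by ring
    · have : ⟪γ l, v⟫ = 0 := haz l (Finset.mem_Icc.2 ⟨hl'.1, by omega⟩)
      rw [this]; ring_nf; simp
  -- lower bound for the quadratic form at v
  have hsplitQ : ⟪v, T v⟫ = ⟪u, T u⟫ + 2 * ⟪T u, v - u⟫ + ⟪v - u, T (v - u)⟫ := by
    have hv' : v = u + (v - u) := by abel
    calc ⟪v, T v⟫ = ⟪u + (v - u), T u + T (v - u)⟫ := by rw [← map_add, ← hv']
      _ = ⟪u, T u⟫ + ⟪u, T (v - u)⟫ + (⟪v - u, T u⟫ + ⟪v - u, T (v - u)⟫) := by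
          rw [inner_add_left, inner_add_right, inner_add_right]
      _ = ⟪u, T u⟫ + 2 * ⟪T u, v - u⟫ + ⟪v - u, T (v - u)⟫ := by
          rw [← hTsa u (v - u), real_inner_comm (v - u) (T u)]; ring
  have hcross : -(‖T‖ * SD * ((k : ℝ) * SD * δm)) ≤ ⟪T u, v - u⟫ := by
    have h1 : |⟪T u, v - u⟫| ≤ ‖T u‖ * ‖v - u‖ := abs_real_inner_le_norm _ _
    have h2 : ‖T u‖ ≤ ‖T‖ * SD := by
      calc ‖T u‖ ≤ ‖T‖ * ‖u‖ := T.le_opNorm u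
        _ = ‖T‖ * SD := by rw [hnu]
    have h3 : ‖T u‖ * ‖v - u‖ ≤ (‖T‖ * SD) * ((k : ℝ) * SD * δm) :=
      mul_le_mul h2 hvu (norm_nonneg _) (by positivity)
    have h4 := neg_abs_le ⟪T u, v - u⟫
    linarith
  have hTe0 : 0 ≤ ⟪v - u, T (v - u)⟫ := hTpos _
  have hlowQ : μ i * D - 2 * (‖T‖ * SD * ((k : ℝ) * SD * δm)) ≤ ⟪v, T v⟫ := by
    rw [hsplitQ]; linarith
  have hnv : ‖v‖ ≤ SD + (k : ℝ) * SD * δm := by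
    calc ‖v‖ = ‖u + (v - u)‖ := by congr 1; abel
      _ ≤ ‖u‖ + ‖v - u‖ := norm_add_le _ _
      _ ≤ SD + (k : ℝ) * SD * δm := by rw [hnu]; linarith
  have hnv2 : ‖v‖ ^ 2 ≤ (SD + (k : ℝ) * SD * δm) ^ 2 :=
    pow_le_pow_left₀ (norm_nonneg _) hnv 2
  have hkey : μ i * D - 2 * ‖T‖ * (k : ℝ) * D * δm ≤ lam i * (D * (1 + (k : ℝ) * δm) ^ 2) := by
    have e1 : lam i * ‖v‖ ^ 2 ≤ lam i * (SD + (k : ℝ) * SD * δm) ^ 2 :=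
      mul_le_mul_of_nonneg_left hnv2 hlam0
    have e2 : (SD + (k : ℝ) * SD * δm) ^ 2 = D * (1 + (k : ℝ) * δm) ^ 2 := by
      have : (SD + (k : ℝ) * SD * δm) ^ 2 = SD ^ 2 * (1 + (k : ℝ) * δm) ^ 2 := by ring
      rw [this, hSD2]
    have e3 : μ i * D - 2 * (‖T‖ * SD * ((k : ℝ) * SD * δm)) =
        μ i * D - 2 * ‖T‖ * (k : ℝ) * (SD ^ 2) * δm := by ring
    rw [hSD2] at e3
    calc μ i * D - 2 * ‖T‖ * (k : ℝ) * D * δm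
        = μ i * D - 2 * (‖T‖ * SD * ((k : ℝ) * SD * δm)) := by rw [e3]
      _ ≤ ⟪v, T v⟫ := hlowQ
      _ ≤ lam i * ‖v‖ ^ 2 := hvTv_le
      _ ≤ lam i * (SD + (k : ℝ) * SD * δm) ^ 2 := e1
      _ = lam i * (D * (1 + (k : ℝ) * δm) ^ 2) := by rw [e2]
  have hkey2 : μ i - 2 * ‖T‖ * (k : ℝ) * δm ≤ lam i * (1 + (k : ℝ) * δm) ^ 2 := by
    have h5 : (μ i - 2 * ‖T‖ * (k : ℝ) * δm) * D ≤ (lam i * (1 + (k : ℝ) * δm) ^ 2) * D := by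
      calc (μ i - 2 * ‖T‖ * (k : ℝ) * δm) * D = μ i * D - 2 * ‖T‖ * (k : ℝ) * D * δm := by ring
        _ ≤ lam i * (D * (1 + (k : ℝ) * δm) ^ 2) := hkey
        _ = (lam i * (1 + (k : ℝ) * δm) ^ 2) * D := by ring
    exact le_of_mul_le_mul_right h5 hD
  -- conclude
  have hμi1 : μ i ≤ μ 1 := hμmono 1 (Set.mem_Icc.2 ⟨le_refl 1, by omega⟩)
    i (Set.mem_Icc.2 ⟨hi'.1, by omega⟩) hi'.1
  have hlamμ1 : lam i ≤ μ 1 := le_trans (hupper i hi) hμi1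
  have hfin2 : μ i - lam i < ε := by
    have e4 : lam i * (1 + (k : ℝ) * δm) ^ 2
        = lam i + lam i * (2 * (k : ℝ) * δm + (k : ℝ) ^ 2 * δm ^ 2) := by ring
    have e5 : lam i * (2 * (k : ℝ) * δm + (k : ℝ) ^ 2 * δm ^ 2)
        ≤ μ 1 * (2 * (k : ℝ) * δm + (k : ℝ) ^ 2 * δm ^ 2) := by
      refine mul_le_mul_of_nonneg_right hlamμ1 (by positivity)
    have e6 : μ 1 * ((k : ℝ) ^ 2 * δm ^ 2) ≤ μ 1 * ((k : ℝ) ^ 2 * δm) := by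
      refine mul_le_mul_of_nonneg_left ?_ hμ1
      calc (k : ℝ) ^ 2 * δm ^ 2 = ((k : ℝ) ^ 2 * δm) * δm := by ring
        _ ≤ ((k : ℝ) ^ 2 * δm) * 1 := by
            refine mul_le_mul_of_nonneg_left hδm1 (by positivity)
        _ = (k : ℝ) ^ 2 * δm := by ring
    have e7 : μ 1 * (2 * (k : ℝ) * δm) ≤ μ 1 * (2 * (k : ℝ) ^ 2 * δm) := by
      refine mul_le_mul_of_nonneg_left ?_ hμ1
      have : (k : ℝ) ≤ (k : ℝ) ^ 2 := by nlinarith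
      nlinarith [hδm0.le]
    have e8 : δm * C - δm ≤ ε - δm := by linarith
    nlinarith [hkey2, e5, e6, e7, hδm0]
  have : lam i - μ i < ε := by linarith [hupper i hi]
  rw [abs_sub_lt_iff]
  exact ⟨this, hfin2⟩


end
end
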